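/- arXiv:1803.09485 — 2 statements merged into one kernel-verified Lean document; each statement's English description precedes it below -/
import Mathlib

section
/- There is a set A ⊆ ω whose degree of enumerability 𝔈_A is both quasiminimal and compact. Hence 𝔈_A is closed, nonzero, and does not bound any nonzero degree of solvability: {f} ≰_s E_A for every nonrecursive total f. -/
/-!  Common definitions: mass problems in Baire space, Medvedev reducibility,
enumeration reducibility, trees, and related notions. -/

/-- A Turing functional, given by a monotone partial recursive map taking a
finite initial segment of the oracle and an input to an output value. -/
structure TuringFunctional where
  app : List ℕ × ℕ →. ℕ
  partrec : Partrec app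
  mono : ∀ {σ τ : List ℕ} {n y : ℕ}, σ <+: τ → y ∈ app (σ, n) → y ∈ app (τ, n)

/-- `Φ.Total g f` means that `Φ(g)` is total and equals `f`. -/
def TuringFunctional.Total (Φ : TuringFunctional) (g f : ℕ → ℕ) : Prop :=
  ∀ n, ∃ k, f n ∈ Φ.app ((List.range k).map g, n)

/-- Medvedev reducibility `A ≤ₛ B` between mass problems. -/
def MedvedevLE (A B : Set (ℕ → ℕ)) : Prop :=
  ∃ Φ : TuringFunctional, ∀ g ∈ B, ∃ f, Φ.Total g f ∧ f ∈ A

/-- Medvedev equivalence. -/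
def MedvedevEquiv (A B : Set (ℕ → ℕ)) : Prop := MedvedevLE A B ∧ MedvedevLE B A

/-- The problem of enumerability of `A`: all functions with range `A`. -/
def EProb (A : Set ℕ) : Set (ℕ → ℕ) := {f | Set.range f = A}

/-- The graph of `f`, coded as a set of naturals via the pairing function. -/
def graphSet (f : ℕ → ℕ) : Set ℕ := Set.range fun n => Nat.pair n (f n)

/-- The `e`-th enumeration operator applied to a set `B`:
`x` is enumerated iff for some (code `u` of a) finite list contained in `B`,
the `e`-th partial recursive function halts on `⟨x, u⟩`. -/
def enumOpApply (e : ℕ) (B : Set ℕ) : Set ℕ :=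
  {x | ∃ u : ℕ, ((Denumerable.ofNat Nat.Partrec.Code e).eval (Nat.pair x u)).Dom ∧
        ∀ y ∈ Denumerable.ofNat (List ℕ) u, y ∈ B}

/-- Enumeration reducibility between subsets of `ℕ`. -/
def EnumLE (A B : Set ℕ) : Prop := ∃ e : ℕ, enumOpApply e B = A

/-- Enumeration equivalence. -/
def EnumEquiv (A B : Set ℕ) : Prop := EnumLE A B ∧ EnumLE B A

/-- `A` is recursively enumerable: it is the domain of a partial recursive function. -/
def REset (A : Set ℕ) : Prop := ∃ c : Nat.Partrec.Code, A = {x | (c.eval x).Dom}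

/-- `A` is quasiminimal: not r.e., and every total function whose graph
enumeration-reduces to `A` is recursive. -/
def Quasiminimal (A : Set ℕ) : Prop :=
  ¬ REset A ∧ ∀ f : ℕ → ℕ, EnumLE (graphSet f) A → Computable f

/-- `A` (as a set) has cototal enumeration degree. -/
def CototalDeg (A : Set ℕ) : Prop := ∃ B : Set ℕ, EnumEquiv B A ∧ EnumLE B Bᶜ

/-- The set `K_A = {⟨e,x⟩ : x ∈ Ψ_e(A)}`. -/
def Kset (A : Set ℕ) : Set ℕ := {p | p.unpair.2 ∈ enumOpApply p.unpair.1 A}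

/-- The skip of `A`. -/
def skipSet (A : Set ℕ) : Set ℕ := (Kset A)ᶜ

/-- The recursive join of two subsets of `ℕ`. -/
def joinSet (A B : Set ℕ) : Set ℕ :=
  {n | (n % 2 = 0 ∧ n / 2 ∈ A) ∨ (n % 2 = 1 ∧ n / 2 ∈ B)}

/-- `A` is recursively enumerable in (the characteristic function of) `X`,
i.e. `A ≤ₑ X ⊕ Xᶜ`. -/
def REin (A X : Set ℕ) : Prop := EnumLE A (joinSet X Xᶜ)

/-- Trees: subsets of `ω^{<ω}` closed under initial segments. -/
def IsTree (T : Set (List ℕ)) : Prop := ∀ ⦃σ τ : List ℕ⦄, σ <+: τ → τ ∈ T → σ ∈ T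

/-- A leaf of `T`: a node with no proper extension in `T`. -/
def IsLeaf (T : Set (List ℕ)) (σ : List ℕ) : Prop :=
  σ ∈ T ∧ ∀ τ ∈ T, σ <+: τ → τ = σ

/-- `T` has no leaves. -/
def NoLeaves (T : Set (List ℕ)) : Prop := ∀ σ ∈ T, ¬ IsLeaf T σ

/-- `T` is finitely branching. -/
def FinBranching (T : Set (List ℕ)) : Prop := ∀ σ ∈ T, {n : ℕ | σ ++ [n] ∈ T}.Finite

/-- `[T]`: the set of infinite paths through `T`. -/
def Paths (T : Set (List ℕ)) : Set (ℕ → ℕ) := {f | ∀ n, (List.range n).map f ∈ T}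

/-- A tree coded as a subset of `ℕ`. -/
def codeTree (T : Set (List ℕ)) : Set ℕ := Encodable.encode '' T

/-- `T` is `h`-bounded. -/
def BoundedTree (h : ℕ → ℕ) (T : Set (List ℕ)) : Prop :=
  ∀ σ ∈ T, ∀ i : ℕ, ∀ hi : i < σ.length, σ.get ⟨i, hi⟩ < h i

/-- A uniformly e-pointed tree with respect to functions. -/
def UEPfun (T : Set (List ℕ)) : Prop :=
  IsTree T ∧ FinBranching T ∧ NoLeaves T ∧
    ∃ e : ℕ, ∀ g ∈ Paths T, enumOpApply e (graphSet g) = codeTree T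

/-- A uniformly e-pointed tree with respect to sets (a subtree of `2^{<ω}`). -/
def UEPset (T : Set (List ℕ)) : Prop :=
  IsTree T ∧ (∀ σ ∈ T, ∀ i ∈ σ, i ≤ 1) ∧ NoLeaves T ∧
    ∃ e : ℕ, ∀ g ∈ Paths T, enumOpApply e {n | g n = 1} = codeTree T

/-- Prepend `i` to a function. -/
def consFun (i : ℕ) (f : ℕ → ℕ) : ℕ → ℕ := fun n => Nat.casesOn n i fun m => f m

/-- The mass problem `0⌢A ∪ 1⌢B`, representing the meet of the degrees of `A` and `B`. -/
def meetProb (A B : Set (ℕ → ℕ)) : Set (ℕ → ℕ) := consFun 0 '' A ∪ consFun 1 '' B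

/-- A mass problem has meet-irreducible Medvedev degree: its degree is not the
meet of two strictly larger degrees. -/
def MeetIrred (X : Set (ℕ → ℕ)) : Prop :=
  ¬ ∃ B C : Set (ℕ → ℕ), MedvedevEquiv (meetProb B C) X ∧
      (MedvedevLE X B ∧ ¬ MedvedevLE B X) ∧ (MedvedevLE X C ∧ ¬ MedvedevLE C X)

/-- `σ` is an initial segment of `f`. -/
def strPrefix (σ : List ℕ) (f : ℕ → ℕ) : Prop := (List.range σ.length).map f = σ

/-- A uniform mass problem. -/
def UniformProb (A : Set (ℕ → ℕ)) : Prop :=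
  ∀ σ : List ℕ, (∃ f ∈ A, strPrefix σ f) → MedvedevLE {f | f ∈ A ∧ strPrefix σ f} A

/-- The `{0,1}`-valued diagonally nonrecursive functions. -/
def DNR2 : Set (ℕ → ℕ) :=
  {f | (∀ n, f n ≤ 1) ∧
    ∀ e y : ℕ, y ∈ (Denumerable.ofNat Nat.Partrec.Code e).eval e → f e ≠ y}

/-- `C_A`: injective enumerations of subsets of `A`. -/
def CProb (A : Set ℕ) : Set (ℕ → ℕ) :=
  {f | Function.Injective f ∧ Set.range f ⊆ A}

/-! ### Auxiliary development for stmt17 -/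

namespace S17

/-- The level of a coded element. -/
def lvl (x : ℕ) : ℕ := x.unpair.1

/-- The claim (a finite list of naturals) carried by a coded element. -/
def clm (x : ℕ) : List ℕ := Denumerable.ofNat (List ℕ) x.unpair.2.unpair.2

/-- Make an element at level `n` with tag `t` carrying claim `L`. -/
def mkEl (n t : ℕ) (L : List ℕ) : ℕ := Nat.pair n (Nat.pair t (Encodable.encode L))

@[simp] lemma lvl_mkEl (n t : ℕ) (L : List ℕ) : lvl (mkEl n t L) = n := by
  simp [lvl, mkEl]

@[simp] lemma clm_mkEl (n t : ℕ) (L : List ℕ) : clm (mkEl n t L) = L := by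
  simp [clm, mkEl]

lemma mkEl_inj {n t n' t' : ℕ} {L L' : List ℕ} (h : mkEl n t L = mkEl n' t' L') :
    n = n' ∧ t = t' ∧ L = L' := by
  unfold mkEl at h
  have h1 := congrArg Nat.unpair h
  simp only [Nat.unpair_pair] at h1
  have h2 := congrArg Nat.unpair (congrArg Prod.snd h1)
  simp only [Nat.unpair_pair] at h2
  refine ⟨congrArg Prod.fst h1, congrArg Prod.fst h2, ?_⟩
  have := congrArg Prod.snd h2
  exact Encodable.encode_injective this

/-- Forcing conditions: finite lists of levels. -/
abbrev Cond := List (List ℕ)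

/-- All elements occurring in a condition. -/
def elems (p : Cond) : List ℕ := p.flatten

/-- Well-formedness of a condition. -/
def CondOK (p : Cond) : Prop :=
  ∀ i (h : i < p.length), p[i] ≠ [] ∧
    ∀ x ∈ p[i], lvl x = i ∧ ∀ z ∈ clm x, z ∈ (p.take i).flatten

/-- Extension of conditions: `q` extends `p`. -/
def Ext (q p : Cond) : Prop :=
  p <+: q ∧ ∀ i (h : i < q.length), p.length ≤ i →
    ∀ x ∈ q[i], ∀ a ∈ elems p, a ∈ clm x

lemma Ext.refl (p : Cond) : Ext p p :=
  ⟨List.prefix_refl p, fun i h hi x _ => absurd h (by omega)⟩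

lemma Ext.len_le {q p : Cond} (h : Ext q p) : p.length ≤ q.length :=
  h.1.length_le

lemma getElem_of_prefix {p q : Cond} (h : p <+: q) {i : ℕ} (hi : i < p.length) :
    q[i]'(lt_of_lt_of_le hi h.length_le) = p[i] := by
  obtain ⟨t, rfl⟩ := h
  exact List.getElem_append_left hi

lemma elems_subset_of_prefix {p q : Cond} (h : p <+: q) :
    ∀ a ∈ elems p, a ∈ elems q := by
  obtain ⟨t, rfl⟩ := h
  intro a ha
  simp only [elems, List.flatten_append, List.mem_append]
  exact Or.inl ha

lemma Ext.elems_subset {q p : Cond} (h : Ext q p) : ∀ a ∈ elems p, a ∈ elems q :=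
  elems_subset_of_prefix h.1

lemma Ext.trans {r q p : Cond} (hrq : Ext r q) (hqp : Ext q p) : Ext r p := by
  refine ⟨hqp.1.trans hrq.1, fun i h hi x hx a ha => ?_⟩
  by_cases hiq : q.length ≤ i
  · exact hrq.2 i h hiq x hx a (hqp.elems_subset a ha)
  · push_neg at hiq
    have hq : r[i] = q[i]'hiq := getElem_of_prefix hrq.1 hiq
    rw [hq] at hx
    exact hqp.2 i hiq hi x hx a ha

lemma mem_elems_iff {p : Cond} {x : ℕ} :
    x ∈ elems p ↔ ∃ i, ∃ h : i < p.length, x ∈ p[i] := by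
  simp only [elems, List.mem_flatten]
  constructor
  · rintro ⟨L, hL, hx⟩
    obtain ⟨i, hi, rfl⟩ := List.mem_iff_getElem.1 hL
    exact ⟨i, hi, hx⟩
  · rintro ⟨i, hi, hx⟩
    exact ⟨p[i], List.getElem_mem hi, hx⟩

lemma mem_elems_of_mem {p : Cond} {i : ℕ} (h : i < p.length) {x : ℕ}
    (hx : x ∈ p[i]) : x ∈ elems p :=
  mem_elems_iff.2 ⟨i, h, hx⟩

lemma take_flatten_subset {p : Cond} (i : ℕ) :
    ∀ z ∈ (p.take i).flatten, z ∈ elems p :=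
  elems_subset_of_prefix (List.take_prefix i p)

lemma mem_take_flatten_iff {p : Cond} {i : ℕ} (hip : i ≤ p.length) {z : ℕ} :
    z ∈ (p.take i).flatten ↔ ∃ j, ∃ h : j < p.length, j < i ∧ z ∈ p[j] := by
  have hlen : (p.take i).length = i := by simp [List.length_take]; omega
  have : (p.take i).flatten = elems (p.take i) := rfl
  rw [this, mem_elems_iff (p := p.take i)]
  constructor
  · rintro ⟨j, hj, hz⟩
    rw [hlen] at hj
    have hjp : j < p.length := by omega
    refine ⟨j, hjp, hj, ?_⟩
    rwa [List.getElem_take] at hz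
  · rintro ⟨j, hjp, hji, hz⟩
    refine ⟨j, by omega, ?_⟩
    rwa [List.getElem_take]

lemma CondOK.lvl_eq {p : Cond} (hp : CondOK p) {i : ℕ} (h : i < p.length) {x : ℕ}
    (hx : x ∈ p[i]) : lvl x = i :=
  ((hp i h).2 x hx).1

lemma CondOK.mem_level {p : Cond} (hp : CondOK p) {x : ℕ} (hx : x ∈ elems p) :
    ∃ h : lvl x < p.length, x ∈ p[lvl x] := by
  obtain ⟨i, hi, hxi⟩ := mem_elems_iff.1 hx
  have := hp.lvl_eq hi hxi
  subst this
  exact ⟨hi, hxi⟩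

lemma CondOK.clm_subset {p : Cond} (hp : CondOK p) {x : ℕ} (hx : x ∈ elems p) :
    ∀ z ∈ clm x, z ∈ elems p := by
  obtain ⟨i, hi, hxi⟩ := mem_elems_iff.1 hx
  intro z hz
  exact take_flatten_subset i z (((hp i hi).2 x hxi).2 z hz)

lemma CondOK.clm_lvl_lt {p : Cond} (hp : CondOK p) {i : ℕ} (hi : i < p.length)
    {x : ℕ} (hx : x ∈ p[i]) {z : ℕ} (hz : z ∈ clm x) : lvl z < i := by
  have h2 := ((hp i hi).2 x hx).2 z hz
  obtain ⟨j, hjp, hji, hzj⟩ := (mem_take_flatten_iff (le_of_lt hi)).1 h2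
  have := hp.lvl_eq hjp hzj
  omega

/-- One-step extension with a single new level `[x]`. -/
lemma extend_single {p : Cond} (hp : CondOK p) {x : ℕ} (hx : lvl x = p.length)
    (hcl : ∀ z ∈ clm x, z ∈ elems p) (hfull : ∀ a ∈ elems p, a ∈ clm x) :
    CondOK (p ++ [[x]]) ∧ Ext (p ++ [[x]]) p := by
  have hlen : (p ++ [[x]]).length = p.length + 1 := by simp
  constructor
  · intro i h
    have h' : i < p.length + 1 := by rw [hlen] at h; exact h
    by_cases hip : i < p.length
    · rw [List.getElem_append_left hip]
      refine ⟨(hp i hip).1, fun y hy => ⟨(hp.lvl_eq hip hy), fun z hz => ?_⟩⟩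
      have := ((hp i hip).2 y hy).2 z hz
      rwa [List.take_append_of_le_length (le_of_lt hip)]
    · have hi : i = p.length := by omega
      subst hi
      have hg : (p ++ [[x]])[p.length]'h = [x] := by
        rw [List.getElem_append_right le_rfl]
        simp
      rw [hg]
      refine ⟨by simp, fun y hy => ?_⟩
      have hyx : y = x := by simpa using hy
      have htake : (p ++ [[x]]).take p.length = p := by
        rw [List.take_append_of_le_length le_rfl]; simp
      rw [hyx, htake]
      exact ⟨hx, hcl⟩
  · refine ⟨⟨[[x]], rfl⟩, fun i h hi y hy a ha => ?_⟩
    have h' : i < p.length + 1 := by rw [hlen] at h; exact h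
    have hieq : i = p.length := by omega
    subst hieq
    have hg : (p ++ [[x]])[p.length]'h = [x] := by
      rw [List.getElem_append_right le_rfl]
      simp
    rw [hg] at hy
    have hyx : y = x := by simpa using hy
    rw [hyx]
    exact hfull a ha

/-- Levelwise amalgamation of two extensions of `p`. -/
def amalg (p q₁ q₂ : Cond) : Cond :=
  p ++ (List.range (max q₁.length q₂.length - p.length)).map
    (fun j => q₁.getD (p.length + j) [] ++ q₂.getD (p.length + j) [])

lemma getD_eq_getElem {q : Cond} {i : ℕ} (h : i < q.length) : q.getD i [] = q[i] := by
  rw [List.getD_eq_getElem?_getD, List.getElem?_eq_getElem h]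
  rfl

lemma getD_eq_nil {q : Cond} {i : ℕ} (h : q.length ≤ i) : q.getD i [] = [] := by
  rw [List.getD_eq_getElem?_getD, List.getElem?_eq_none h]
  rfl

section Amalg

variable {p q₁ q₂ : Cond} (hl1 : p.length ≤ q₁.length) (hl2 : p.length ≤ q₂.length)

include hl1 in
lemma amalg_length : (amalg p q₁ q₂).length = max q₁.length q₂.length := by
  have : p.length ≤ max q₁.length q₂.length := le_trans hl1 (le_max_left _ _)
  simp only [amalg, List.length_append, List.length_map, List.length_range]
  omega

include hl1 hl2 in
lemma amalg_get_high {i : ℕ} (hi : p.length ≤ i) (h : i < (amalg p q₁ q₂).length) :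
    (amalg p q₁ q₂)[i] = q₁.getD i [] ++ q₂.getD i [] := by
  simp only [amalg, List.getElem_append_right hi, List.getElem_map, List.getElem_range,
    Nat.add_sub_cancel' hi]

lemma amalg_get_low {i : ℕ} (hi : i < p.length) :
    (amalg p q₁ q₂)[i]'(lt_of_lt_of_le hi (List.IsPrefix.length_le ⟨_, rfl⟩)) = p[i] :=
  getElem_of_prefix ⟨_, rfl⟩ hi

include hl1 hl2 in
lemma mem_amalg₁ {j : ℕ} (hj : j < q₁.length) {x : ℕ}
    (hq1p : p <+: q₁) (hx : x ∈ q₁[j]) :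
    ∃ h : j < (amalg p q₁ q₂).length, x ∈ (amalg p q₁ q₂)[j] := by
  have hlen := amalg_length (q₂ := q₂) hl1
  have h : j < (amalg p q₁ q₂).length := by
    rw [hlen]; exact lt_max_iff.2 (Or.inl hj)
  refine ⟨h, ?_⟩
  by_cases hjp : j < p.length
  · rw [show (amalg p q₁ q₂)[j] = p[j] from amalg_get_low hjp]
    rw [getElem_of_prefix hq1p hjp] at hx
    exact hx
  · rw [amalg_get_high hl1 hl2 (le_of_not_gt hjp) h, List.mem_append,
      getD_eq_getElem hj]
    exact Or.inl hx

include hl1 hl2 in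
lemma mem_amalg₂ {j : ℕ} (hj : j < q₂.length) {x : ℕ}
    (hq2p : p <+: q₂) (hx : x ∈ q₂[j]) :
    ∃ h : j < (amalg p q₁ q₂).length, x ∈ (amalg p q₁ q₂)[j] := by
  have hlen := amalg_length (q₂ := q₂) hl1
  have h : j < (amalg p q₁ q₂).length := by
    rw [hlen]; exact lt_max_iff.2 (Or.inr hj)
  refine ⟨h, ?_⟩
  by_cases hjp : j < p.length
  · rw [show (amalg p q₁ q₂)[j] = p[j] from amalg_get_low hjp]
    rw [getElem_of_prefix hq2p hjp] at hx
    exact hx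
  · rw [amalg_get_high hl1 hl2 (le_of_not_gt hjp) h, List.mem_append,
      getD_eq_getElem hj]
    exact Or.inr hx

end Amalg

lemma amalg_spec {p q₁ q₂ : Cond} (hq1 : CondOK q₁) (hq2 : CondOK q₂)
    (he1 : Ext q₁ p) (he2 : Ext q₂ p) :
    CondOK (amalg p q₁ q₂) ∧ Ext (amalg p q₁ q₂) p ∧
      (∀ a ∈ elems q₁, a ∈ elems (amalg p q₁ q₂)) ∧
      (∀ a ∈ elems q₂, a ∈ elems (amalg p q₁ q₂)) := by
  have hl1 : p.length ≤ q₁.length := he1.len_le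
  have hl2 : p.length ≤ q₂.length := he2.len_le
  have hlen := amalg_length (q₂ := q₂) hl1
  set r := amalg p q₁ q₂ with hr
  -- membership transfer
  have hmem1 : ∀ a ∈ elems q₁, a ∈ elems r := by
    intro a ha
    obtain ⟨j, hj, hx⟩ := mem_elems_iff.1 ha
    obtain ⟨h, hx'⟩ := mem_amalg₁ (q₂ := q₂) hl1 hl2 hj he1.1 hx
    exact mem_elems_of_mem h hx'
  have hmem2 : ∀ a ∈ elems q₂, a ∈ elems r := by
    intro a ha
    obtain ⟨j, hj, hx⟩ := mem_elems_iff.1 ha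
    obtain ⟨h, hx'⟩ := mem_amalg₂ (q₁ := q₁) hl1 hl2 hj he2.1 hx
    exact mem_elems_of_mem h hx'
  -- claims of q₁-elements land in r's take-flatten
  have hclaim1 : ∀ i (hi : i < q₁.length),
      ∀ x ∈ q₁[i], ∀ z ∈ clm x, z ∈ (r.take i).flatten := by
    intro i hi x hx z hz
    have hzq := ((hq1 i hi).2 x hx).2 z hz
    obtain ⟨j, hjq, hji, hzj⟩ := (mem_take_flatten_iff (le_of_lt hi)).1 hzq
    obtain ⟨h, hz'⟩ := mem_amalg₁ (q₂ := q₂) hl1 hl2 hjq he1.1 hzj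
    exact (mem_take_flatten_iff (by omega : i ≤ r.length)).2 ⟨j, h, hji, hz'⟩
  have hclaim2 : ∀ i (hi : i < q₂.length),
      ∀ x ∈ q₂[i], ∀ z ∈ clm x, z ∈ (r.take i).flatten := by
    intro i hi x hx z hz
    have hzq := ((hq2 i hi).2 x hx).2 z hz
    obtain ⟨j, hjq, hji, hzj⟩ := (mem_take_flatten_iff (le_of_lt hi)).1 hzq
    obtain ⟨h, hz'⟩ := mem_amalg₂ (q₁ := q₁) hl1 hl2 hjq he2.1 hzj
    exact (mem_take_flatten_iff (by omega : i ≤ r.length)).2 ⟨j, h, hji, hz'⟩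
  have hOK : CondOK r := by
    intro i h
    by_cases hip : i < p.length
    · have hg : r[i] = p[i] := amalg_get_low hip
      rw [hg]
      have hiq : i < q₁.length := by omega
      have hgq : q₁[i] = p[i] := getElem_of_prefix he1.1 hip
      constructor
      · rw [← hgq]; exact (hq1 i hiq).1
      · intro x hx
        refine ⟨hq1.lvl_eq hiq (by rw [hgq]; exact hx), fun z hz => ?_⟩
        have := hclaim1 i hiq x (by rw [hgq]; exact hx) z hz
        exact this
    · have hg : r[i] = q₁.getD i [] ++ q₂.getD i [] :=
        amalg_get_high hl1 hl2 (le_of_not_gt hip) h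
      rw [hg]
      have hcase : i < q₁.length ∨ i < q₂.length :=
        lt_max_iff.1 (by rw [← hlen]; exact h)
      constructor
      · rcases hcase with hc | hc
        · have := (hq1 i hc).1
          rw [getD_eq_getElem hc]
          simp only [ne_eq, List.append_eq_nil_iff]
          tauto
        · have := (hq2 i hc).1
          rw [getD_eq_getElem (q := q₂) hc]
          simp only [ne_eq, List.append_eq_nil_iff]
          tauto
      · intro x hx
        rcases List.mem_append.1 hx with hx1 | hx1
        · have hc : i < q₁.length := by
            by_contra hc
            rw [getD_eq_nil (le_of_not_gt hc)] at hx1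
            exact absurd hx1 (List.not_mem_nil)
          rw [getD_eq_getElem hc] at hx1
          exact ⟨hq1.lvl_eq hc hx1, hclaim1 i hc x hx1⟩
        · have hc : i < q₂.length := by
            by_contra hc
            rw [getD_eq_nil (le_of_not_gt hc)] at hx1
            exact absurd hx1 (List.not_mem_nil)
          rw [getD_eq_getElem (q := q₂) hc] at hx1
          exact ⟨hq2.lvl_eq hc hx1, hclaim2 i hc x hx1⟩
  refine ⟨hOK, ⟨⟨_, rfl⟩, ?_⟩, hmem1, hmem2⟩
  intro i h hi x hx a ha
  have hg : r[i] = q₁.getD i [] ++ q₂.getD i [] :=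
    amalg_get_high hl1 hl2 hi h
  rw [hg] at hx
  rcases List.mem_append.1 hx with hx1 | hx1
  · have hc : i < q₁.length := by
      by_contra hc
      rw [getD_eq_nil (le_of_not_gt hc)] at hx1
      exact absurd hx1 (List.not_mem_nil)
    rw [getD_eq_getElem hc] at hx1
    exact he1.2 i hc hi x hx1 a ha
  · have hc : i < q₂.length := by
      by_contra hc
      rw [getD_eq_nil (le_of_not_gt hc)] at hx1
      exact absurd hx1 (List.not_mem_nil)
    rw [getD_eq_getElem (q := q₂) hc] at hx1
    exact he2.2 i hc hi x hx1 a ha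

/-! #### Dense sets and the generic sequence -/

/-- Domain of the `b`-th partial recursive function. -/
def WSet (b : ℕ) : Set ℕ := {x | ((Denumerable.ofNat Nat.Partrec.Code b).eval x).Dom}

/-- The operator `e` produces two different values in some column on the
positive part of `q`. -/
def Split (e : ℕ) (q : Cond) : Prop :=
  ∃ n y₁ y₂, y₁ ≠ y₂ ∧ Nat.pair n y₁ ∈ enumOpApply e {z | z ∈ elems q} ∧
    Nat.pair n y₂ ∈ enumOpApply e {z | z ∈ elems q}

/-- The requirements. -/
def Dset (i : ℕ) : Set Cond :=
  if i.unpair.1 = 0 then {q | i.unpair.2 ≤ q.length}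
  else if i.unpair.1 = 1 then
    {q | ∃ x, (x ∈ elems q ∧ x ∉ WSet i.unpair.2) ∨
       (x ∈ WSet i.unpair.2 ∧ lvl x < q.length ∧ x ∉ elems q)}
  else {q | Split i.unpair.2 q ∨ ∀ r, CondOK r → Ext r q → ¬ Split i.unpair.2 r}

lemma extend_tag {p : Cond} (hp : CondOK p) (t : ℕ) :
    CondOK (p ++ [[mkEl p.length t (elems p)]]) ∧
      Ext (p ++ [[mkEl p.length t (elems p)]]) p := by
  refine extend_single hp (lvl_mkEl _ _ _) ?_ ?_ <;> rw [clm_mkEl] <;> exact fun a h => h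

lemma elems_extend_tag (p : Cond) (t : ℕ) :
    elems (p ++ [[mkEl p.length t (elems p)]]) = elems p ++ [mkEl p.length t (elems p)] := by
  simp [elems]

lemma mkEl_not_mem {p : Cond} (hp : CondOK p) (t : ℕ) {L : List ℕ} :
    mkEl p.length t L ∉ elems p := by
  intro h
  obtain ⟨hl, _⟩ := hp.mem_level h
  rw [lvl_mkEl] at hl
  omega

lemma exists_len (b : ℕ) {p : Cond} (hp : CondOK p) :
    ∃ q, CondOK q ∧ Ext q p ∧ b ≤ q.length := by
  induction b with
  | zero => exact ⟨p, hp, Ext.refl p, Nat.zero_le _⟩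
  | succ n ih =>
    obtain ⟨q, hq, he, hb⟩ := ih
    obtain ⟨hq', he'⟩ := extend_tag hq 0
    refine ⟨q ++ [[mkEl q.length 0 (elems q)]], hq', he'.trans he, ?_⟩
    simp only [List.length_append, List.length_cons, List.length_nil]
    omega

lemma dense (i : ℕ) {p : Cond} (hp : CondOK p) :
    ∃ q, CondOK q ∧ Ext q p ∧ q ∈ Dset i := by
  rcases Nat.lt_or_ge i.unpair.1 2 with h2 | h2
  · interval_cases h : i.unpair.1
    · obtain ⟨q, hq, he, hb⟩ := exists_len i.unpair.2 hp
      exact ⟨q, hq, he, by simp [Dset, h, hb]⟩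
    · -- diagonalization against `WSet i.unpair.2`
      by_cases hW : mkEl p.length 0 (elems p) ∈ WSet i.unpair.2
      · obtain ⟨hq, he⟩ := extend_tag hp 1
        refine ⟨_, hq, he, ?_⟩
        have hD : Dset i = {q | ∃ x, (x ∈ elems q ∧ x ∉ WSet i.unpair.2) ∨
            (x ∈ WSet i.unpair.2 ∧ lvl x < q.length ∧ x ∉ elems q)} := by
          simp [Dset, h]
        rw [hD]
        refine ⟨mkEl p.length 0 (elems p), Or.inr ⟨hW, ?_, ?_⟩⟩
        · rw [lvl_mkEl]
          simp only [List.length_append, List.length_cons, List.length_nil]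
          omega
        · rw [elems_extend_tag, List.mem_append]
          rintro (hm | hm)
          · exact mkEl_not_mem hp 0 hm
          · have : mkEl p.length 0 (elems p) = mkEl p.length 1 (elems p) := by
              simpa using hm
            have := (mkEl_inj this).2.1
            omega
      · obtain ⟨hq, he⟩ := extend_tag hp 0
        refine ⟨_, hq, he, ?_⟩
        have hD : Dset i = {q | ∃ x, (x ∈ elems q ∧ x ∉ WSet i.unpair.2) ∨
            (x ∈ WSet i.unpair.2 ∧ lvl x < q.length ∧ x ∉ elems q)} := by
          simp [Dset, h]
        rw [hD]
        refine ⟨mkEl p.length 0 (elems p), Or.inl ⟨?_, hW⟩⟩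
        rw [elems_extend_tag, List.mem_append]
        exact Or.inr (by simp)
  · have h0 : ¬ i.unpair.1 = 0 := by omega
    have h1 : ¬ i.unpair.1 = 1 := by omega
    by_cases hs : ∃ r, CondOK r ∧ Ext r p ∧ Split i.unpair.2 r
    · obtain ⟨r, hr, he, hsp⟩ := hs
      exact ⟨r, hr, he, by simp only [Dset, h0, h1, if_false]; exact Or.inl hsp⟩
    · push_neg at hs
      refine ⟨p, hp, Ext.refl p, ?_⟩
      simp only [Dset, h0, h1, if_false]
      exact Or.inr fun r hr he => hs r hr he

lemma ok0 : CondOK [[mkEl 0 0 ([] : List ℕ)]] := by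
  intro i h
  simp only [List.length_cons, List.length_nil] at h
  have : i = 0 := by omega
  subst this
  refine ⟨by simp, fun x hx => ?_⟩
  have hxe : x = mkEl 0 0 [] := by simpa using hx
  subst hxe
  refine ⟨lvl_mkEl _ _ _, fun z hz => ?_⟩
  rw [clm_mkEl] at hz
  exact absurd hz (List.not_mem_nil)

/-- The generic sequence. -/
noncomputable def Gs : ℕ → {p : Cond // CondOK p} := fun n =>
  Nat.rec ⟨[[mkEl 0 0 ([] : List ℕ)]], ok0⟩
    (fun i ih => ⟨Classical.choose (dense i ih.2),
      (Classical.choose_spec (dense i ih.2)).1⟩) n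

/-- The generic sequence of conditions. -/
noncomputable def G (n : ℕ) : Cond := (Gs n).1

lemma G_ok (n : ℕ) : CondOK (G n) := (Gs n).2

lemma G_zero : G 0 = [[mkEl 0 0 ([] : List ℕ)]] := rfl

lemma G_succ (i : ℕ) : Ext (G (i + 1)) (G i) ∧ G (i + 1) ∈ Dset i := by
  have h := Classical.choose_spec (dense i (Gs i).2)
  exact ⟨h.2.1, h.2.2⟩

lemma G_ext {i j : ℕ} (h : i ≤ j) : Ext (G j) (G i) := by
  induction j with
  | zero =>
    have : i = 0 := by omega
    subst this; exact Ext.refl _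
  | succ n ih =>
    rcases Nat.lt_or_ge i (n + 1) with h' | h'
    · exact (G_succ n).1.trans (ih (by omega))
    · have : i = n + 1 := by omega
      subst this; exact Ext.refl _

/-- The generic set. -/
def Aset : Set ℕ := {a | ∃ i, a ∈ elems (G i)}

lemma mem_Aset_of_stage {a i : ℕ} (h : a ∈ elems (G i)) : a ∈ Aset := ⟨i, h⟩

lemma Aset_nonempty : Aset.Nonempty :=
  ⟨mkEl 0 0 [], 0, by rw [G_zero]; simp [elems]⟩

lemma stage_mono {a i j : ℕ} (hij : i ≤ j) (h : a ∈ elems (G i)) :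
    a ∈ elems (G j) := (G_ext hij).elems_subset a h

/-- Finality: levels below the length of a stage are decided. -/
lemma finality {a i : ℕ} (ha : a ∈ Aset) (hl : lvl a < (G i).length) :
    a ∈ elems (G i) := by
  obtain ⟨j, hj⟩ := ha
  have hj' : a ∈ elems (G (max i j)) := stage_mono (le_max_right i j) hj
  obtain ⟨hlt, hmem⟩ := (G_ok (max i j)).mem_level hj'
  have hpre : (G i) <+: (G (max i j)) := (G_ext (le_max_left i j)).1
  rw [getElem_of_prefix hpre hl] at hmem
  exact mem_elems_of_mem hl hmem

lemma claims_true {a : ℕ} (ha : a ∈ Aset) : ∀ z ∈ clm a, z ∈ Aset := by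
  obtain ⟨i, hi⟩ := ha
  exact fun z hz => ⟨i, (G_ok i).clm_subset hi z hz⟩

/-- Maturity: every element of `A` is eventually claimed by all elements of
sufficiently high level. -/
lemma maturity {a : ℕ} (ha : a ∈ Aset) :
    ∃ d, ∀ x ∈ Aset, d ≤ lvl x → a ∈ clm x := by
  obtain ⟨i, hi⟩ := ha
  refine ⟨(G i).length, fun x hx hlvl => ?_⟩
  obtain ⟨j, hj⟩ := hx
  have hj' : x ∈ elems (G (max i j)) := stage_mono (le_max_right i j) hj
  obtain ⟨hlt, hmem⟩ := (G_ok (max i j)).mem_level hj'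
  exact (G_ext (le_max_left i j)).2 (lvl x) hlt hlvl x hmem a hi

lemma exists_stage_len (n : ℕ) : ∃ i, n < (G i).length := by
  refine ⟨Nat.pair 0 (n + 1) + 1, ?_⟩
  have h := (G_succ (Nat.pair 0 (n + 1))).2
  simp only [Dset, Nat.unpair_pair] at h
  norm_num at h
  omega

/-- The level sets of `A`. -/
def SnS (n : ℕ) : Set ℕ := {a | a ∈ Aset ∧ lvl a = n}

lemma SnS_eq (n : ℕ) {i : ℕ} (hi : n < (G i).length) :
    SnS n = {a | a ∈ (G i)[n]} := by
  ext a
  constructor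
  · rintro ⟨ha, hl⟩
    subst hl
    have := finality ha hi
    obtain ⟨hlt, hmem⟩ := (G_ok i).mem_level this
    exact hmem
  · intro ha
    exact ⟨mem_Aset_of_stage (mem_elems_of_mem hi ha),
      (G_ok i).lvl_eq hi ha⟩

lemma SnS_finite (n : ℕ) : (SnS n).Finite := by
  obtain ⟨i, hi⟩ := exists_stage_len n
  rw [SnS_eq n hi]
  exact (G i)[n].finite_toSet

lemma SnS_nonempty (n : ℕ) : (SnS n).Nonempty := by
  obtain ⟨i, hi⟩ := exists_stage_len n
  rw [SnS_eq n hi]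
  obtain ⟨x, hx⟩ := List.exists_mem_of_ne_nil _ ((G_ok i) n hi).1
  exact ⟨x, hx⟩

lemma SnS_sub (n : ℕ) : SnS n ⊆ Aset := fun _ h => h.1

/-- `A` is not r.e. -/
lemma Aset_not_REset : ¬ REset Aset := by
  rintro ⟨c, hc⟩
  set b := Encodable.encode c with hb
  have hW : WSet b = Aset := by
    rw [hc, WSet, hb, Denumerable.ofNat_encode]
  have h := (G_succ (Nat.pair 1 b)).2
  simp only [Dset, Nat.unpair_pair] at h
  norm_num at h
  obtain ⟨x, hx⟩ := h
  rcases hx with ⟨hx1, hx2⟩ | ⟨hx1, hx2, hx3⟩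
  · exact hx2 (hW ▸ mem_Aset_of_stage hx1)
  · exact hx3 (finality (hW ▸ hx1) hx2)

lemma G_seal (e : ℕ) :
    Split e (G (Nat.pair 2 e + 1)) ∨
      ∀ r, CondOK r → Ext r (G (Nat.pair 2 e + 1)) → ¬ Split e r := by
  have h := (G_succ (Nat.pair 2 e)).2
  simp only [Dset, Nat.unpair_pair] at h
  norm_num at h
  exact h

/-! #### Building conditions from structural witnesses -/

/-- Structural property of a finite list `E` of new elements over `q`. -/
def OkE (q : Cond) (E : List ℕ) : Prop :=
  ∀ x ∈ E, q.length ≤ lvl x ∧ (∀ a ∈ elems q, a ∈ clm x) ∧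
    ∀ z ∈ clm x, (z ∈ elems q ∨ z ∈ E) ∧ lvl z < lvl x

/-- An upper bound for the levels in `E`. -/
def bnd (E : List ℕ) (k : ℕ) : ℕ := E.foldr (fun x m => max (lvl x + 1) m) k

lemma le_bnd (E : List ℕ) (k : ℕ) : k ≤ bnd E k := by
  induction E with
  | nil => exact le_rfl
  | cons a l ih => exact le_trans ih (le_max_right _ _)

lemma lvl_lt_bnd {E : List ℕ} {x : ℕ} (h : x ∈ E) (k : ℕ) : lvl x < bnd E k := by
  induction E with
  | nil => exact absurd h (List.not_mem_nil)
  | cons a l ih =>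
    rcases List.mem_cons.1 h with rfl | h'
    · exact lt_of_lt_of_le (Nat.lt_succ_self _) (le_max_left _ _)
    · exact lt_of_lt_of_le (ih h') (le_max_right _ _)

lemma take_flatten_mono {r : Cond} {k i : ℕ} (hki : k ≤ i) (hi : i ≤ r.length)
    {z : ℕ} (hz : z ∈ (r.take k).flatten) : z ∈ (r.take i).flatten := by
  obtain ⟨j, hj, hjk, hzj⟩ := (mem_take_flatten_iff (le_trans hki hi)).1 hz
  exact (mem_take_flatten_iff hi).2 ⟨j, hj, by omega, hzj⟩

/-- From a structural witness build an extension containing it. -/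
lemma buildCond {q : Cond} (hq : CondOK q) {E : List ℕ} (hE : OkE q E) :
    ∃ r, CondOK r ∧ Ext r q ∧ ∀ a ∈ E, a ∈ elems r := by
  classical
  set k := q.length with hk
  set N := bnd E k with hN
  refine ⟨q ++ (List.range (N - k)).map
    (fun j => mkEl (k + j) 0 (elems q) :: E.filter (fun x => lvl x == k + j)),
    ?_, ?_, ?_⟩
  all_goals
    set r := q ++ (List.range (N - k)).map
      (fun j => mkEl (k + j) 0 (elems q) :: E.filter (fun x => lvl x == k + j)) with hr
  all_goals
    have hrlen : r.length = N := by
      rw [hr]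
      simp only [List.length_append, List.length_map, List.length_range]
      have := le_bnd E k
      omega
  all_goals
    have htk : r.take k = q := by
      rw [hr, List.take_append_of_le_length le_rfl, List.take_length]
  all_goals
    have hget : ∀ i (h : i < r.length), k ≤ i →
        r[i] = mkEl i 0 (elems q) :: E.filter (fun x => lvl x == i) := by
      intro i h hki
      have hx : (q ++ (List.range (N - k)).map
          (fun j => mkEl (k + j) 0 (elems q) :: E.filter (fun x => lvl x == k + j)))[i]'(hr ▸ h) =
          mkEl i 0 (elems q) :: E.filter (fun x => lvl x == i) := by
        rw [List.getElem_append_right hki, List.getElem_map, List.getElem_range,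
          Nat.add_sub_cancel' hki]
      exact hx
  all_goals
    have hmemE : ∀ x ∈ E, ∃ h : lvl x < r.length, x ∈ r[lvl x] := by
      intro x hx
      have h1 : lvl x < N := lvl_lt_bnd hx k
      have h2 : k ≤ lvl x := (hE x hx).1
      refine ⟨by omega, ?_⟩
      rw [hget (lvl x) (by omega) h2]
      refine List.mem_cons.2 (Or.inr ?_)
      rw [List.mem_filter]
      exact ⟨hx, by simp⟩
  all_goals
    have hqmem : ∀ z ∈ elems q, z ∈ (r.take k).flatten := by
      intro z hz
      rw [htk]; exact hz
  · -- CondOK r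
    intro i h
    by_cases hik : i < k
    · have hg : r[i] = q[i] := getElem_of_prefix ⟨_, rfl⟩ hik
      rw [hg]
      refine ⟨(hq i hik).1, fun x hx => ⟨hq.lvl_eq hik hx, fun z hz => ?_⟩⟩
      have := ((hq i hik).2 x hx).2 z hz
      rw [hr, List.take_append_of_le_length (le_of_lt hik)]
      exact this
    · push_neg at hik
      rw [hget i h hik]
      refine ⟨by simp, fun x hx => ?_⟩
      rcases List.mem_cons.1 hx with rfl | hx'
      · refine ⟨lvl_mkEl _ _ _, fun z hz => ?_⟩
        rw [clm_mkEl] at hz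
        exact take_flatten_mono hik (le_of_lt h) (hqmem z hz)
      · rw [List.mem_filter] at hx'
        have hlx : lvl x = i := by simpa using hx'.2
        refine ⟨hlx, fun z hz => ?_⟩
        obtain ⟨hzor, hzlt⟩ := (hE x hx'.1).2.2 z hz
        rw [hlx] at hzlt
        rcases hzor with hzq | hzE
        · exact take_flatten_mono hik (le_of_lt h) (hqmem z hzq)
        · obtain ⟨hzr, hzm⟩ := hmemE z hzE
          exact (mem_take_flatten_iff (le_of_lt h)).2 ⟨lvl z, hzr, hzlt, hzm⟩
  · -- Ext r q
    refine ⟨⟨_, rfl⟩, fun i h hi x hx a ha => ?_⟩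
    rw [hget i h hi] at hx
    rcases List.mem_cons.1 hx with rfl | hx'
    · rw [clm_mkEl]; exact ha
    · rw [List.mem_filter] at hx'
      exact (hE x hx'.1).2.1 a ha
  · -- E ⊆ elems r
    intro a ha
    obtain ⟨h, hm⟩ := hmemE a ha
    exact mem_elems_of_mem h hm

/-! #### The sealing argument -/

lemma enumOp_mono {e : ℕ} {B B' : Set ℕ} (h : B ⊆ B') :
    enumOpApply e B ⊆ enumOpApply e B' := by
  rintro x ⟨u, hu, hsub⟩
  exact ⟨u, hu, fun y hy => h (hsub y hy)⟩

lemma mem_graphSet {f : ℕ → ℕ} {n y : ℕ} :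
    Nat.pair n y ∈ graphSet f ↔ y = f n := by
  constructor
  · rintro ⟨k, hk⟩
    have h1 := congrArg Nat.unpair hk
    simp only [Nat.unpair_pair, Prod.mk.injEq] at h1
    obtain ⟨hn, hy⟩ := h1
    rw [← hy, hn]
  · rintro rfl
    exact ⟨n, rfl⟩

lemma elems_sub_Aset {i : ℕ} : ∀ z ∈ elems (G i), z ∈ Aset :=
  fun _ h => mem_Aset_of_stage h

lemma stages_list (L : List ℕ) (h : ∀ z ∈ L, z ∈ Aset) :
    ∃ j, ∀ z ∈ L, z ∈ elems (G j) := by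
  induction L with
  | nil => exact ⟨0, by simp⟩
  | cons a l ih =>
    obtain ⟨j₁, hj₁⟩ := ih fun z hz => h z (List.mem_cons_of_mem a hz)
    obtain ⟨j₂, hj₂⟩ := h a (List.mem_cons_self)
    refine ⟨max j₂ j₁, fun z hz => ?_⟩
    rcases List.mem_cons.1 hz with rfl | hz'
    · exact stage_mono (le_max_left _ _) hj₂
    · exact stage_mono (le_max_right _ _) (hj₁ z hz')

section Seal

variable {e : ℕ} {f : ℕ → ℕ}

/-- In the sealed case, values computed on any extension agree with `f`. -/
lemma val_unique (hEq : enumOpApply e Aset = graphSet f)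
    (hseal : ∀ r, CondOK r → Ext r (G (Nat.pair 2 e + 1)) → ¬ Split e r)
    {r : Cond} (hr : CondOK r) (hext : Ext r (G (Nat.pair 2 e + 1)))
    {n y : ℕ} (hmem : Nat.pair n y ∈ enumOpApply e {z | z ∈ elems r}) :
    y = f n := by
  set qs := G (Nat.pair 2 e + 1) with hqs
  by_contra hne
  -- the true value comes from some stage extending `qs`
  have htrue : Nat.pair n (f n) ∈ enumOpApply e Aset := by
    rw [hEq]; exact mem_graphSet.2 rfl
  obtain ⟨u₀, hu₀, hsub₀⟩ := htrue
  obtain ⟨j₀, hj₀⟩ := stages_list _ fun z hz => hsub₀ z hz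
  set j := max j₀ (Nat.pair 2 e + 1) with hj
  have hsubj : ∀ z ∈ Denumerable.ofNat (List ℕ) u₀, z ∈ elems (G j) :=
    fun z hz => stage_mono (le_max_left _ _) (hj₀ z hz)
  have hextj : Ext (G j) qs := G_ext (le_max_right _ _)
  -- amalgamate
  obtain ⟨hOK, hExt, hm1, hm2⟩ := amalg_spec hr (G_ok j) hext hextj
  apply hseal _ hOK hExt
  refine ⟨n, y, f n, hne, ?_, ?_⟩
  · exact enumOp_mono (fun z hz => hm1 z hz) hmem
  · exact ⟨u₀, hu₀, fun z hz => hm2 z (hsubj z hz)⟩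

end Seal

/-! #### Primitive recursive helpers -/

lemma primrec_band : Primrec₂ (· && ·) := by
  have h : Primrec fun p : Bool × Bool => p.1 && p.2 :=
    (Primrec.cond Primrec.fst Primrec.snd (Primrec.const false)).of_eq
      (fun p => by cases p.1 <;> simp)
  exact h.to₂

lemma primrec_bor : Primrec₂ (· || ·) := by
  have h : Primrec fun p : Bool × Bool => p.1 || p.2 :=
    (Primrec.cond Primrec.fst (Primrec.const true) Primrec.snd).of_eq
      (fun p => by cases p.1 <;> simp)
  exact h.to₂

theorem primrec_list_all {α β : Type} [Primcodable α] [Primcodable β]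
    {f : α → List β} {p : α → β → Bool} (hf : Primrec f) (hp : Primrec₂ p) :
    Primrec fun a => (f a).all (p a) := by
  have h : Primrec₂ fun (a : α) (bs : β × Bool) => p a bs.1 && bs.2 :=
    primrec_band.comp (hp.comp Primrec.fst (Primrec.fst.comp Primrec.snd))
      (Primrec.snd.comp Primrec.snd)
  have := Primrec.list_foldr hf (Primrec.const true) h
  refine this.of_eq fun a => ?_
  induction f a with
  | nil => rfl
  | cons b l ih => simp [List.all_cons, ← ih]

theorem primrec_list_any {α β : Type} [Primcodable α] [Primcodable β]
    {f : α → List β} {p : α → β → Bool} (hf : Primrec f) (hp : Primrec₂ p) :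
    Primrec fun a => (f a).any (p a) := by
  have h : Primrec₂ fun (a : α) (bs : β × Bool) => p a bs.1 || bs.2 :=
    primrec_bor.comp (hp.comp Primrec.fst (Primrec.fst.comp Primrec.snd))
      (Primrec.snd.comp Primrec.snd)
  have := Primrec.list_foldr hf (Primrec.const false) h
  refine this.of_eq fun a => ?_
  induction f a with
  | nil => rfl
  | cons b l ih => simp [List.any_cons, ← ih]

/-- Boolean list membership. -/
def bmem (L : List ℕ) (z : ℕ) : Bool := L.any (fun w => w == z)

lemma bmem_iff {L : List ℕ} {z : ℕ} : bmem L z = true ↔ z ∈ L := by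
  simp [bmem, List.any_eq_true]

lemma primrec_bmem : Primrec₂ bmem :=
  (primrec_list_any (Primrec.fst) ((Primrec.beq.comp Primrec.snd
    (Primrec.snd.comp Primrec.fst)).to₂)).to₂

lemma primrec_lvl : Primrec lvl := Primrec.fst.comp Primrec.unpair

lemma primrec_clm : Primrec clm :=
  (Primrec.ofNat (List ℕ)).comp
    ((Primrec.snd.comp Primrec.unpair).comp (Primrec.snd.comp Primrec.unpair))

/-- Boolean version of `OkE`. -/
def okEb (Q : List ℕ) (k : ℕ) (E : List ℕ) : Bool :=
  E.all fun x => (decide (k ≤ lvl x) && Q.all fun a => bmem (clm x) a) &&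
    (clm x).all fun z => (bmem Q z || bmem E z) && decide (lvl z < lvl x)

lemma okEb_iff {q : Cond} {E : List ℕ} :
    okEb (elems q) q.length E = true ↔ OkE q E := by
  simp only [okEb, OkE, List.all_eq_true, Bool.and_eq_true, decide_eq_true_eq,
    Bool.or_eq_true, bmem_iff]
  constructor
  · intro h x hx
    obtain ⟨⟨h1, h2⟩, h3⟩ := h x hx
    exact ⟨h1, h2, fun z hz => ⟨(h3 z hz).1, (h3 z hz).2⟩⟩
  · intro h x hx
    obtain ⟨h1, h2, h3⟩ := h x hx
    exact ⟨⟨h1, h2⟩, fun z hz => ⟨(h3 z hz).1, (h3 z hz).2⟩⟩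

lemma primrec_okEb (Q : List ℕ) (k : ℕ) : Primrec (okEb Q k) := by
  apply primrec_list_all (Primrec.id)
  -- inner predicate of (E, x)
  have hlvlx : Primrec fun p : List ℕ × ℕ => lvl p.2 := primrec_lvl.comp Primrec.snd
  have hclmx : Primrec fun p : List ℕ × ℕ => clm p.2 := primrec_clm.comp Primrec.snd
  have h1 : Primrec fun p : List ℕ × ℕ => decide (k ≤ lvl p.2) :=
    (Primrec.nat_le.comp (Primrec.const k) hlvlx).decide
  have h2 : Primrec fun p : List ℕ × ℕ => Q.all fun a => bmem (clm p.2) a :=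
    primrec_list_all (Primrec.const Q) ((primrec_bmem.comp (hclmx.comp Primrec.fst)
      Primrec.snd).to₂)
  have h3 : Primrec fun p : List ℕ × ℕ =>
      (clm p.2).all fun z => (bmem Q z || bmem p.1 z) && decide (lvl z < lvl p.2) := by
    apply primrec_list_all hclmx
    have ha : Primrec fun w : (List ℕ × ℕ) × ℕ => bmem Q w.2 :=
      primrec_bmem.comp (Primrec.const Q) Primrec.snd
    have hb : Primrec fun w : (List ℕ × ℕ) × ℕ => bmem w.1.1 w.2 :=
      primrec_bmem.comp (Primrec.fst.comp Primrec.fst) Primrec.snd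
    have hc : Primrec fun w : (List ℕ × ℕ) × ℕ => decide (lvl w.2 < lvl w.1.2) :=
      (Primrec.nat_lt.comp (primrec_lvl.comp Primrec.snd)
        (primrec_lvl.comp (Primrec.snd.comp Primrec.fst))).decide
    exact (primrec_band.comp (primrec_bor.comp ha hb) hc).to₂
  exact (primrec_band.comp (primrec_band.comp h1 h2) h3).to₂

/-- The master search predicate, for fixed parameters `Q`, `k`, `e`. -/
def chk (Q : List ℕ) (k e : ℕ) (n m : ℕ) : Bool :=
  okEb Q k (Denumerable.ofNat (List ℕ) m.unpair.1.unpair.1) &&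
  (Nat.Partrec.Code.evaln m.unpair.2.unpair.2 (Denumerable.ofNat Nat.Partrec.Code e)
    (Nat.pair (Nat.pair n m.unpair.1.unpair.2) m.unpair.2.unpair.1)).isSome &&
  (Denumerable.ofNat (List ℕ) m.unpair.2.unpair.1).all fun z =>
    bmem Q z || bmem (Denumerable.ofNat (List ℕ) m.unpair.1.unpair.1) z

lemma primrec_chk (Q : List ℕ) (k e : ℕ) : Primrec₂ (chk Q k e) := by
  have hu1 : Primrec fun p : ℕ × ℕ => p.2.unpair.1.unpair.1 :=
    (Primrec.fst.comp Primrec.unpair).comp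
      ((Primrec.fst.comp Primrec.unpair).comp Primrec.snd)
  have hy : Primrec fun p : ℕ × ℕ => p.2.unpair.1.unpair.2 :=
    (Primrec.snd.comp Primrec.unpair).comp
      ((Primrec.fst.comp Primrec.unpair).comp Primrec.snd)
  have hu : Primrec fun p : ℕ × ℕ => p.2.unpair.2.unpair.1 :=
    (Primrec.fst.comp Primrec.unpair).comp
      ((Primrec.snd.comp Primrec.unpair).comp Primrec.snd)
  have hs : Primrec fun p : ℕ × ℕ => p.2.unpair.2.unpair.2 :=
    (Primrec.snd.comp Primrec.unpair).comp
      ((Primrec.snd.comp Primrec.unpair).comp Primrec.snd)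
  have hE : Primrec fun p : ℕ × ℕ => Denumerable.ofNat (List ℕ) p.2.unpair.1.unpair.1 :=
    (Primrec.ofNat (List ℕ)).comp hu1
  have h1 : Primrec fun p : ℕ × ℕ =>
      okEb Q k (Denumerable.ofNat (List ℕ) p.2.unpair.1.unpair.1) :=
    (primrec_okEb Q k).comp hE
  have h2 : Primrec fun p : ℕ × ℕ =>
      (Nat.Partrec.Code.evaln p.2.unpair.2.unpair.2
        (Denumerable.ofNat Nat.Partrec.Code e)
        (Nat.pair (Nat.pair p.1 p.2.unpair.1.unpair.2) p.2.unpair.2.unpair.1)).isSome := by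
    have harg : Primrec fun p : ℕ × ℕ =>
        Nat.pair (Nat.pair p.1 p.2.unpair.1.unpair.2) p.2.unpair.2.unpair.1 :=
      Primrec₂.natPair.comp (Primrec₂.natPair.comp Primrec.fst hy) hu
    have hev : Primrec fun p : ℕ × ℕ =>
        Nat.Partrec.Code.evaln p.2.unpair.2.unpair.2
          (Denumerable.ofNat Nat.Partrec.Code e)
          (Nat.pair (Nat.pair p.1 p.2.unpair.1.unpair.2) p.2.unpair.2.unpair.1) :=
      Nat.Partrec.Code.primrec_evaln.comp
        ((hs.pair (Primrec.const (Denumerable.ofNat Nat.Partrec.Code e))).pair harg)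
    exact Primrec.option_isSome.comp hev
  have h3 : Primrec fun p : ℕ × ℕ =>
      (Denumerable.ofNat (List ℕ) p.2.unpair.2.unpair.1).all fun z =>
        bmem Q z || bmem (Denumerable.ofNat (List ℕ) p.2.unpair.1.unpair.1) z := by
    apply primrec_list_all ((Primrec.ofNat (List ℕ)).comp hu)
    have ha : Primrec fun w : (ℕ × ℕ) × ℕ => bmem Q w.2 :=
      primrec_bmem.comp (Primrec.const Q) Primrec.snd
    have hb : Primrec fun w : (ℕ × ℕ) × ℕ =>
        bmem (Denumerable.ofNat (List ℕ) w.1.2.unpair.1.unpair.1) w.2 :=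
      primrec_bmem.comp (hE.comp Primrec.fst) Primrec.snd
    exact (primrec_bor.comp ha hb).to₂
  exact (primrec_band.comp (primrec_band.comp h1 h2) h3).to₂

/-! #### Quasiminimality of `Aset` -/

section SealCompute

variable {e : ℕ} {f : ℕ → ℕ}

lemma chk_sound (hEq : enumOpApply e Aset = graphSet f)
    (hseal : ∀ r, CondOK r → Ext r (G (Nat.pair 2 e + 1)) → ¬ Split e r)
    {n m : ℕ}
    (h : chk (elems (G (Nat.pair 2 e + 1))) (G (Nat.pair 2 e + 1)).length e n m
      = true) :
    m.unpair.1.unpair.2 = f n := by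
  rw [chk] at h
  simp only [Bool.and_eq_true] at h
  obtain ⟨⟨hok, hev⟩, hsub⟩ := h
  have hOkE : OkE (G (Nat.pair 2 e + 1))
      (Denumerable.ofNat (List ℕ) m.unpair.1.unpair.1) := okEb_iff.1 hok
  obtain ⟨r, hrOK, hrExt, hrE⟩ := buildCond (G_ok _) hOkE
  have hmem : Nat.pair n m.unpair.1.unpair.2 ∈ enumOpApply e {z | z ∈ elems r} := by
    refine ⟨m.unpair.2.unpair.1, ?_, ?_⟩
    · obtain ⟨v, hv⟩ := Option.isSome_iff_exists.1 hev
      have hvm : v ∈ Nat.Partrec.Code.evaln m.unpair.2.unpair.2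
          (Denumerable.ofNat Nat.Partrec.Code e)
          (Nat.pair (Nat.pair n m.unpair.1.unpair.2) m.unpair.2.unpair.1) := hv
      exact Part.dom_iff_mem.2 ⟨v, Nat.Partrec.Code.evaln_sound hvm⟩
    · intro z hz
      have hz' := (List.all_eq_true.1 hsub) z hz
      simp only [Bool.or_eq_true, bmem_iff] at hz'
      rcases hz' with h1 | h1
      · exact hrExt.elems_subset z h1
      · exact hrE z h1
  exact val_unique hEq hseal hrOK hrExt hmem

lemma chk_total (hEq : enumOpApply e Aset = graphSet f) (n : ℕ) :
    ∃ m, chk (elems (G (Nat.pair 2 e + 1))) (G (Nat.pair 2 e + 1)).length e n m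
      = true := by
  classical
  set qs := G (Nat.pair 2 e + 1) with hqs
  have htrue : Nat.pair n (f n) ∈ enumOpApply e Aset := by
    rw [hEq]; exact mem_graphSet.2 rfl
  obtain ⟨u₀, hdom, hsub⟩ := htrue
  obtain ⟨j₀, hj₀⟩ := stages_list _ fun z hz => hsub z hz
  set j := max j₀ (Nat.pair 2 e + 1) with hj
  have hsubj : ∀ z ∈ Denumerable.ofNat (List ℕ) u₀, z ∈ elems (G j) :=
    fun z hz => stage_mono (le_max_left _ _) (hj₀ z hz)
  have hExtj : Ext (G j) qs := G_ext (le_max_right _ _)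
  set E₀ := (elems (G j)).filter (fun x => decide (qs.length ≤ lvl x)) with hE₀
  -- membership facts for `E₀`
  have hE₀mem : ∀ x, x ∈ E₀ ↔ x ∈ elems (G j) ∧ qs.length ≤ lvl x := by
    intro x
    rw [hE₀, List.mem_filter]
    simp
  -- elements of `G j` of low level are in `qs`
  have hlow : ∀ z ∈ elems (G j), lvl z < qs.length → z ∈ elems qs := by
    intro z hz hlt
    obtain ⟨hzlt, hzm⟩ := (G_ok j).mem_level hz
    rw [getElem_of_prefix hExtj.1 hlt] at hzm
    exact mem_elems_of_mem hlt hzm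
  have hOkE : OkE qs E₀ := by
    intro x hx
    obtain ⟨hx1, hx2⟩ := (hE₀mem x).1 hx
    obtain ⟨hlt, hmem⟩ := (G_ok j).mem_level hx1
    refine ⟨hx2, fun a ha => hExtj.2 (lvl x) hlt hx2 x hmem a ha, fun z hz => ?_⟩
    have hzj : z ∈ elems (G j) := (G_ok j).clm_subset hx1 z hz
    have hzlt : lvl z < lvl x := (G_ok j).clm_lvl_lt hlt hmem hz
    refine ⟨?_, hzlt⟩
    by_cases hk : qs.length ≤ lvl z
    · exact Or.inr ((hE₀mem z).2 ⟨hzj, hk⟩)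
    · exact Or.inl (hlow z hzj (by omega))
  -- the halting computation
  obtain ⟨v, hv⟩ := Part.dom_iff_mem.1 hdom
  obtain ⟨s, hs⟩ := Nat.Partrec.Code.evaln_complete.1 hv
  refine ⟨Nat.pair (Nat.pair (Encodable.encode E₀) (f n)) (Nat.pair u₀ s), ?_⟩
  rw [chk]
  simp only [Nat.unpair_pair, Denumerable.ofNat_encode, Bool.and_eq_true]
  refine ⟨⟨okEb_iff.2 hOkE, ?_⟩, ?_⟩
  · exact Option.isSome_iff_exists.2 ⟨v, hs⟩
  · rw [List.all_eq_true]
    intro z hz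
    have hzj := hsubj z hz
    simp only [Bool.or_eq_true, bmem_iff]
    by_cases hk : qs.length ≤ lvl z
    · exact Or.inr ((hE₀mem z).2 ⟨hzj, hk⟩)
    · exact Or.inl (hlow z hzj (by omega))

end SealCompute

/-- Quasiminimality, second half: every total function enumeration-reducible
to `Aset` is computable. -/
lemma quasi_Aset : ∀ f : ℕ → ℕ, EnumLE (graphSet f) Aset → Computable f := by
  rintro f ⟨e, hEq⟩
  rcases G_seal e with hsplit | hseal
  · exfalso
    obtain ⟨n, y₁, y₂, hne, h1, h2⟩ := hsplit
    have hsub : {z | z ∈ elems (G (Nat.pair 2 e + 1))} ⊆ Aset :=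
      fun z hz => mem_Aset_of_stage hz
    have e1 := mem_graphSet.1 (hEq ▸ enumOp_mono hsub h1)
    have e2 := mem_graphSet.1 (hEq ▸ enumOp_mono hsub h2)
    exact hne (e1.trans e2.symm)
  · set Q := elems (G (Nat.pair 2 e + 1)) with hQ
    set k := (G (Nat.pair 2 e + 1)).length with hk
    have hP : Computable₂ (chk Q k e) := (primrec_chk Q k e).to_comp
    have hex : Computable fun m : ℕ => m.unpair.1.unpair.2 :=
      ((Primrec.snd.comp Primrec.unpair).comp
        (Primrec.fst.comp Primrec.unpair)).to_comp
    have hF : Partrec fun n =>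
        (Nat.rfind (fun m => (Part.some (chk Q k e n m) : Part Bool))).map
          (fun m => m.unpair.1.unpair.2) := by
      refine Partrec.map (Partrec.rfind ?_) ((hex.comp Computable.snd).to₂)
      exact hP.partrec₂
    apply hF.of_eq_tot
    intro n
    obtain ⟨m₁, hm₁⟩ := chk_total hEq n
    have hdom : (Nat.rfind (fun m => (Part.some (chk Q k e n m) : Part Bool))).Dom := by
      apply Nat.rfind_dom.2
      exact ⟨m₁, Part.mem_some_iff.2 hm₁.symm, fun {_} _ => trivial⟩
    have hmem := Part.get_mem hdom
    have hspec := Nat.rfind_spec hmem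
    have hchk : chk Q k e n ((Nat.rfind _).get hdom) = true :=
      (Part.mem_some_iff.1 hspec).symm
    have hval := chk_sound hEq hseal hchk
    have := Part.mem_map (fun m : ℕ => m.unpair.1.unpair.2) hmem
    simpa [hval] using this

/-- `Aset` is quasiminimal. -/
lemma Aset_quasiminimal : Quasiminimal Aset := ⟨Aset_not_REset, quasi_Aset⟩

/-! #### Turing functionals -/

lemma prefix_map_range {g : ℕ → ℕ} {a b : ℕ} (h : a ≤ b) :
    (List.range a).map g <+: (List.range b).map g := by
  refine List.IsPrefix.map g ?_
  have : (List.range b).take a = List.range a := by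
    rw [List.take_range]
    congr 1
    omega
  rw [← this]
  exact List.take_prefix a (List.range b)

lemma getD0_map_range {g : ℕ → ℕ} {a i : ℕ} (h : i < a) :
    ((List.range a).map g).getD i 0 = g i := by
  rw [List.getD_eq_getElem _ _ (by simpa using h), List.getElem_map,
    List.getElem_range]

/-- The identity functional. -/
def idApp : List ℕ × ℕ →. ℕ := fun q => Part.ofOption (q.1[q.2]?)

lemma idApp_partrec : Partrec idApp :=
  Computable.ofOption (Primrec.list_getElem?.to_comp : Computable₂ (fun (l : List ℕ) (n : ℕ) => l[n]?))

lemma idApp_mono {σ τ : List ℕ} {n y : ℕ} (h : σ <+: τ)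
    (hy : y ∈ idApp (σ, n)) : y ∈ idApp (τ, n) := by
  rw [idApp, Part.mem_ofOption] at hy ⊢
  simp only [Option.mem_def] at hy ⊢
  obtain ⟨hn, he⟩ := List.getElem?_eq_some_iff.1 hy
  obtain ⟨t, rfl⟩ := h
  rw [List.getElem?_append_left hn]
  exact hy

/-- The identity Turing functional. -/
def PhiId : TuringFunctional :=
  ⟨idApp, idApp_partrec, fun h hy => idApp_mono h hy⟩

lemma PhiId_total (g : ℕ → ℕ) : PhiId.Total g g := by
  intro n
  refine ⟨n + 1, ?_⟩
  show g n ∈ idApp _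
  rw [idApp, Part.mem_ofOption]
  simp

lemma medvedevLE_refl (X : Set (ℕ → ℕ)) : MedvedevLE X X :=
  ⟨PhiId, fun g hg => ⟨g, PhiId_total g, hg⟩⟩

/-- Agreement: a converging value on a true prefix of `g` equals the total
value of the functional on `g`. -/
lemma total_agree {Φ : TuringFunctional} {g f : ℕ → ℕ} (hT : Φ.Total g f)
    {σ : List ℕ} (hpre : (List.range σ.length).map g = σ) {n y : ℕ}
    (hy : y ∈ Φ.app (σ, n)) : y = f n := by
  obtain ⟨k, hk⟩ := hT n
  set K := max k σ.length with hK
  have h1 : y ∈ Φ.app ((List.range K).map g, n) := by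
    refine Φ.mono ?_ hy
    rw [← hpre]
    exact prefix_map_range (le_max_right _ _)
  have h2 : f n ∈ Φ.app ((List.range K).map g, n) :=
    Φ.mono (prefix_map_range (le_max_left _ _)) hk
  exact Part.mem_unique h1 h2

/-- A canonical enumeration of a nonempty set of naturals. -/
noncomputable def enumOf (A : Set ℕ) (a₀ : ℕ) : ℕ → ℕ := fun n =>
  have := Classical.dec (n ∈ A)
  if n ∈ A then n else a₀

lemma enumOf_mem {A : Set ℕ} {a₀ : ℕ} (h : a₀ ∈ A) :
    enumOf A a₀ ∈ EProb A := by
  ext x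
  constructor
  · rintro ⟨n, rfl⟩
    rw [enumOf]
    split <;> assumption
  · intro hx
    refine ⟨x, ?_⟩
    rw [enumOf]
    split
    · rfl
    · contradiction

/-- Prepending a list over `A` to an enumeration of `A`. -/
noncomputable def prependEnum (σ : List ℕ) (g : ℕ → ℕ) : ℕ → ℕ := fun n =>
  if h : n < σ.length then σ[n] else g (n - σ.length)

lemma prependEnum_mem {A : Set ℕ} {σ : List ℕ} (hσ : ∀ z ∈ σ, z ∈ A)
    {g : ℕ → ℕ} (hg : g ∈ EProb A) : prependEnum σ g ∈ EProb A := by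
  ext x
  constructor
  · rintro ⟨n, rfl⟩
    rw [prependEnum]
    split
    · exact hσ _ (List.getElem_mem _)
    · rw [← hg]
      exact ⟨_, rfl⟩
  · intro hx
    rw [← hg] at hx
    obtain ⟨n, rfl⟩ := hx
    refine ⟨n + σ.length, ?_⟩
    rw [prependEnum]
    split
    · omega
    · congr 1
      omega

lemma prependEnum_prefix (σ : List ℕ) (g : ℕ → ℕ) :
    (List.range σ.length).map (prependEnum σ g) = σ := by
  apply List.ext_getElem
  · simp
  · intro i h1 h2
    simp only [List.getElem_map, List.getElem_range]
    rw [prependEnum]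
    have : i < σ.length := by simpa using h2
    rw [dif_pos this]

lemma getElem_of_prefix' {α : Type} {p q : List α} (h : p <+: q) {i : ℕ}
    (hi : i < p.length) : q[i]'(lt_of_lt_of_le hi h.length_le) = p[i] := by
  obtain ⟨t, rfl⟩ := h
  exact List.getElem_append_left hi

/-- The compact mass problem equivalent to `EProb Aset`. -/
def Kprob : Set (ℕ → ℕ) := {h | ∀ n, h n ∈ SnS n}

lemma Kprob_compact : IsCompact Kprob := by
  have : Kprob = Set.pi Set.univ (fun n => SnS n) := by
    ext h
    simp [Kprob, Set.mem_pi]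
  rw [this]
  exact isCompact_univ_pi fun n => (SnS_finite n).isCompact

/-! The selector functional: from an enumeration of `Aset` compute a member
of `Kprob`. -/

def selApp : List ℕ × ℕ →. ℕ := fun q =>
  Part.ofOption (q.1[q.1.findIdx (fun x => lvl x == q.2)]?)

lemma selApp_partrec : Partrec selApp := by
  have hfi : Primrec fun q : List ℕ × ℕ => q.1.findIdx (fun x => lvl x == q.2) :=
    Primrec.list_findIdx Primrec.fst ((Primrec.beq.comp
      (primrec_lvl.comp Primrec.snd) (Primrec.snd.comp Primrec.fst)).to₂)
  exact Computable.ofOption ((Primrec.list_getElem?.comp Primrec.fst hfi).to_comp)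

lemma selApp_mono {σ τ : List ℕ} {n y : ℕ} (h : σ <+: τ)
    (hy : y ∈ selApp (σ, n)) : y ∈ selApp (τ, n) := by
  rw [selApp, Part.mem_ofOption, Option.mem_def] at hy ⊢
  obtain ⟨hlt, he⟩ := List.getElem?_eq_some_iff.1 hy
  have hidx := List.IsPrefix.findIdx_eq_of_findIdx_lt_length h hlt
  rw [hidx]
  obtain ⟨t, rfl⟩ := h
  rw [List.getElem?_append_left hlt]
  exact hy

def PhiSel : TuringFunctional := ⟨selApp, selApp_partrec, fun h hy => selApp_mono h hy⟩

lemma Kprob_le_EProb : MedvedevLE Kprob (EProb Aset) := by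
  refine ⟨PhiSel, fun g hg => ?_⟩
  have hex : ∀ n, ∃ k, lvl (g k) = n := by
    intro n
    obtain ⟨a, ha, hl⟩ := SnS_nonempty n
    have : a ∈ Set.range g := by rw [hg]; exact ha
    obtain ⟨k, rfl⟩ := this
    exact ⟨k, hl⟩
  classical
  refine ⟨fun n => g (Nat.find (hex n)), ?_, ?_⟩
  · -- Total
    intro n
    set k₀ := Nat.find (hex n) with hk₀
    refine ⟨k₀ + 1, ?_⟩
    show _ ∈ selApp _
    rw [selApp, Part.mem_ofOption, Option.mem_def]
    set L := (List.range (k₀ + 1)).map g with hL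
    have hlen : L.length = k₀ + 1 := by simp [hL]
    have hgetL : ∀ j (hj : j < k₀ + 1), L[j]'(by omega) = g j := by
      intro j hj
      simp only [hL, List.getElem_map, List.getElem_range]
    have hfi : L.findIdx (fun x => lvl x == n) = k₀ := by
      rw [List.findIdx_eq (by omega)]
      constructor
      · rw [hgetL k₀ (by omega)]
        simpa using Nat.find_spec (hex n)
      · intro j hj
        rw [hgetL j (by omega)]
        simp only [beq_eq_false_iff_ne, ne_eq]
        exact Nat.find_min (hex n) hj
    rw [hfi, List.getElem?_eq_some_iff]
    exact ⟨lt_of_lt_of_le (Nat.lt_succ_self k₀) hlen.ge, hgetL k₀ (by omega)⟩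
  · -- membership in Kprob
    intro n
    refine ⟨?_, Nat.find_spec (hex n)⟩
    rw [← hg]
    exact ⟨_, rfl⟩

/-! The enumeration functional: from a member of `Kprob` compute an
enumeration of `Aset`. -/

/-- The output chunk of an element. -/
def outList (x : ℕ) : List ℕ := x :: clm x

def enumApp : List ℕ × ℕ →. ℕ := fun q =>
  Part.ofOption (if q.2.unpair.1 < q.1.length then
    some ((outList (q.1.getD q.2.unpair.1 0)).getD
      (q.2.unpair.2 % (outList (q.1.getD q.2.unpair.1 0)).length) 0)
  else none)

lemma enumApp_eq (σ : List ℕ) (p : ℕ) :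
    enumApp (σ, p) = Part.ofOption (if p.unpair.1 < σ.length then
      some ((outList (σ.getD p.unpair.1 0)).getD
        (p.unpair.2 % (outList (σ.getD p.unpair.1 0)).length) 0)
    else none) := rfl

lemma enumApp_partrec : Partrec enumApp := by
  have hn : Primrec fun q : List ℕ × ℕ => q.2.unpair.1 :=
    (Primrec.fst.comp Primrec.unpair).comp Primrec.snd
  have hj : Primrec fun q : List ℕ × ℕ => q.2.unpair.2 :=
    (Primrec.snd.comp Primrec.unpair).comp Primrec.snd
  have hx : Primrec fun q : List ℕ × ℕ => q.1.getD q.2.unpair.1 0 :=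
    (Primrec.list_getD 0).comp Primrec.fst hn
  have hL : Primrec fun q : List ℕ × ℕ => outList (q.1.getD q.2.unpair.1 0) :=
    Primrec.list_cons.comp hx (primrec_clm.comp hx)
  have hidx : Primrec fun q : List ℕ × ℕ =>
      q.2.unpair.2 % (outList (q.1.getD q.2.unpair.1 0)).length :=
    Primrec.nat_mod.comp hj (Primrec.list_length.comp hL)
  have hval : Primrec fun q : List ℕ × ℕ =>
      (outList (q.1.getD q.2.unpair.1 0)).getD
        (q.2.unpair.2 % (outList (q.1.getD q.2.unpair.1 0)).length) 0 :=
    (Primrec.list_getD 0).comp hL hidx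
  have hcond : PrimrecPred fun q : List ℕ × ℕ => q.2.unpair.1 < q.1.length :=
    Primrec.nat_lt.comp hn (Primrec.list_length.comp Primrec.fst)
  exact Computable.ofOption
    ((Primrec.ite hcond (Primrec.option_some.comp hval) (Primrec.const none)).to_comp)

lemma enumApp_mono {σ τ : List ℕ} {n y : ℕ} (h : σ <+: τ)
    (hy : y ∈ enumApp (σ, n)) : y ∈ enumApp (τ, n) := by
  rw [enumApp, Part.mem_ofOption, Option.mem_def] at hy ⊢
  by_cases hc : n.unpair.1 < σ.length
  · rw [if_pos hc] at hy
    have hc' : n.unpair.1 < τ.length := lt_of_lt_of_le hc h.length_le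
    rw [if_pos hc']
    have hgd : τ.getD n.unpair.1 0 = σ.getD n.unpair.1 0 := by
      rw [List.getD_eq_getElem _ _ hc, List.getD_eq_getElem _ _ hc']
      exact getElem_of_prefix' h hc
    rw [hgd]
    exact hy
  · rw [if_neg hc] at hy
    exact absurd hy (by simp)

def PhiEnum : TuringFunctional :=
  ⟨enumApp, enumApp_partrec, fun h hy => enumApp_mono h hy⟩

lemma EProb_le_Kprob : MedvedevLE (EProb Aset) Kprob := by
  refine ⟨PhiEnum, fun h hh => ?_⟩
  refine ⟨fun p => (outList (h p.unpair.1)).getD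
    (p.unpair.2 % (outList (h p.unpair.1)).length) 0, ?_, ?_⟩
  · -- Total
    intro p
    refine ⟨p.unpair.1 + 1, ?_⟩
    show _ ∈ enumApp ((List.range (p.unpair.1 + 1)).map h, p)
    rw [enumApp_eq, Part.mem_ofOption, Option.mem_def,
      if_pos (by simpa using Nat.lt_succ_self p.unpair.1),
      getD0_map_range (Nat.lt_succ_self p.unpair.1)]
  · -- the range is `Aset`
    ext a
    constructor
    · rintro ⟨p, rfl⟩
      show (outList (h p.unpair.1)).getD
        (p.unpair.2 % (outList (h p.unpair.1)).length) 0 ∈ Aset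
      set L := outList (h p.unpair.1) with hL
      have hlp : 0 < L.length := by simp [hL, outList]
      have hidx : p.unpair.2 % L.length < L.length := Nat.mod_lt _ hlp
      rw [List.getD_eq_getElem _ _ hidx]
      set v := L[(Nat.unpair p).2 % L.length] with hv
      have hmem : v ∈ L := List.getElem_mem hidx
      rw [hL, outList] at hmem
      rcases List.mem_cons.1 hmem with he | he
      · rw [he]
        exact (hh p.unpair.1).1
      · exact claims_true (hh p.unpair.1).1 _ he
    · intro ha
      obtain ⟨d, hd⟩ := maturity ha
      have hhd : h d ∈ Aset := (hh d).1
      have hlvl : lvl (h d) = d := (hh d).2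
      have hcl : a ∈ clm (h d) := hd (h d) hhd (by omega)
      have hmem : a ∈ outList (h d) := List.mem_cons_of_mem _ hcl
      obtain ⟨j, hj, hje⟩ := List.mem_iff_getElem.1 hmem
      refine ⟨Nat.pair d j, ?_⟩
      show (outList (h (Nat.pair d j).unpair.1)).getD
        ((Nat.pair d j).unpair.2 % (outList (h (Nat.pair d j).unpair.1)).length) 0 = a
      simp only [Nat.unpair_pair]
      rw [Nat.mod_eq_of_lt hj, List.getD_eq_getElem _ _ hj, hje]

/-- `EProb Aset` is Medvedev-equivalent to the compact set `Kprob`. -/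
lemma EProb_equiv_Kprob : MedvedevEquiv (EProb Aset) Kprob :=
  ⟨EProb_le_Kprob, Kprob_le_EProb⟩

/-! #### No computable enumeration, and no bounded solvability degrees -/

lemma REset_of_computable {g : ℕ → ℕ} (hg : Computable g) :
    REset (Set.range g) := by
  have hdec : Computable fun p : ℕ × ℕ => (decide (g p.2 = p.1) : Bool) :=
    (Primrec.eq.decide.to_comp.to₂).comp (hg.comp Computable.snd) Computable.fst
  have hp : Partrec fun x =>
      Nat.rfind fun k => (Part.some (decide (g k = x)) : Part Bool) :=
    Partrec.rfind (hdec.to₂.partrec₂)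
  obtain ⟨c, hc⟩ := Nat.Partrec.Code.exists_code.1 (Partrec.nat_iff.1 hp)
  refine ⟨c, ?_⟩
  ext x
  rw [Set.mem_setOf_eq, hc]
  show x ∈ Set.range g ↔ (Nat.rfind fun k => (Part.some (decide (g k = x)) : Part Bool)).Dom
  refine Iff.trans ?_ Nat.rfind_dom.symm
  constructor
  · rintro ⟨k, hk⟩
    exact ⟨k, Part.mem_some_iff.2 (by simp [hk]), fun {_} _ => trivial⟩
  · rintro ⟨k, hk, -⟩
    have := Part.mem_some_iff.1 hk
    exact ⟨k, of_decide_eq_true this.symm⟩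

lemma no_computable_enum : ¬ ∃ g ∈ EProb Aset, Computable g := by
  rintro ⟨g, hg, hcg⟩
  exact Aset_not_REset (hg ▸ REset_of_computable hcg)

/-- If `{f} ≤ₛ EProb Aset` then `graphSet f ≤ₑ Aset`. -/
lemma graph_red {f : ℕ → ℕ} (hle : MedvedevLE {f} (EProb Aset)) :
    EnumLE (graphSet f) Aset := by
  classical
  obtain ⟨Φ, hΦ⟩ := hle
  obtain ⟨a₀, ha₀⟩ := Aset_nonempty
  -- the enumeration operator
  set ev : ℕ →. ℕ := fun z =>
    (Φ.app (Denumerable.ofNat (List ℕ) z.unpair.2, z.unpair.1.unpair.1)).bind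
      fun y => Part.ofOption (if y = z.unpair.1.unpair.2 then some 0 else none)
    with hev
  have hevp : Partrec ev := by
    have h1 : Computable fun z : ℕ =>
        ((Denumerable.ofNat (List ℕ) z.unpair.2, z.unpair.1.unpair.1) : List ℕ × ℕ) :=
      Computable.pair
        (((Primrec.ofNat (List ℕ)).comp (Primrec.snd.comp Primrec.unpair)).to_comp)
        ((((Primrec.fst.comp Primrec.unpair).comp
          (Primrec.fst.comp Primrec.unpair))).to_comp)
    have h2 : Partrec fun z : ℕ =>
        Φ.app (Denumerable.ofNat (List ℕ) z.unpair.2, z.unpair.1.unpair.1) :=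
      Φ.partrec.comp h1
    refine h2.bind ?_
    have h3 : Computable fun w : ℕ × ℕ =>
        if w.2 = w.1.unpair.1.unpair.2 then (some 0 : Option ℕ) else none :=
      (Primrec.ite (Primrec.eq.comp Primrec.snd
          ((Primrec.snd.comp Primrec.unpair).comp
            ((Primrec.fst.comp Primrec.unpair).comp Primrec.fst)))
        (Primrec.const (some 0)) (Primrec.const none)).to_comp
    exact (Computable.ofOption h3).to₂
  obtain ⟨c, hc⟩ := Nat.Partrec.Code.exists_code.1 (Partrec.nat_iff.1 hevp)
  refine ⟨Encodable.encode c, ?_⟩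
  have hdom : ∀ x u : ℕ,
      ((Denumerable.ofNat Nat.Partrec.Code (Encodable.encode c)).eval
        (Nat.pair x u)).Dom ↔
      x.unpair.2 ∈ Φ.app (Denumerable.ofNat (List ℕ) u, x.unpair.1) := by
    intro x u
    rw [Denumerable.ofNat_encode, hc]
    have hev' : ev (Nat.pair x u) =
        (Φ.app (Denumerable.ofNat (List ℕ) u, x.unpair.1)).bind
          fun y => Part.ofOption (if y = x.unpair.2 then some 0 else none) := by
      rw [hev]
      simp only [Nat.unpair_pair]
    rw [hev']
    constructor
    · intro hd
      obtain ⟨v, hv⟩ := Part.dom_iff_mem.1 hd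
      obtain ⟨y, hy1, hy2⟩ := Part.mem_bind_iff.1 hv
      rw [Part.mem_ofOption] at hy2
      by_cases he : y = x.unpair.2
      · exact he ▸ hy1
      · rw [if_neg he] at hy2
        exact absurd hy2 (by simp)
    · intro hm
      apply Part.dom_iff_mem.2
      refine ⟨0, Part.mem_bind_iff.2 ⟨x.unpair.2, hm, ?_⟩⟩
      rw [Part.mem_ofOption, if_pos rfl]
      simp
  apply Set.eq_of_subset_of_subset
  · rintro x ⟨u, hu, hsub⟩
    rw [hdom x u] at hu
    obtain ⟨f', hT, hf'⟩ := hΦ (prependEnum (Denumerable.ofNat (List ℕ) u)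
        (enumOf Aset a₀))
      (prependEnum_mem hsub (enumOf_mem ha₀))
    rw [Set.mem_singleton_iff] at hf'
    subst hf'
    have hval := total_agree hT (prependEnum_prefix _ _) hu
    have := mem_graphSet.2 hval
    rwa [Nat.pair_unpair] at this
  · rintro x ⟨k, hk⟩
    obtain ⟨f', hT, hf'⟩ := hΦ (enumOf Aset a₀) (enumOf_mem ha₀)
    rw [Set.mem_singleton_iff] at hf'
    subst hf'
    obtain ⟨kk, hkk⟩ := hT k
    refine ⟨Encodable.encode ((List.range kk).map (enumOf Aset a₀)), ?_, ?_⟩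
    · rw [hdom]
      rw [← hk]
      simp only [Nat.unpair_pair, Denumerable.ofNat_encode]
      exact hkk
    · intro y hy
      rw [Denumerable.ofNat_encode] at hy
      obtain ⟨j, _, rfl⟩ := List.mem_map.1 hy
      have : enumOf Aset a₀ j ∈ Set.range (enumOf Aset a₀) := ⟨j, rfl⟩
      rwa [enumOf_mem ha₀] at this

lemma not_solv {f : ℕ → ℕ} (hf : ¬ Computable f) :
    ¬ MedvedevLE {f} (EProb Aset) :=
  fun hle => hf (quasi_Aset f (graph_red hle))

end S17

/-- There is a degree of enumerability `𝔈_A` that is both quasiminimal and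
compact; hence it is closed, nonzero, and bounds no nonzero degree of
solvability. -/
theorem stmt17 :
    ∃ A : Set ℕ, A.Nonempty ∧
      (∃ B : Set ℕ, Quasiminimal B ∧ MedvedevEquiv (EProb A) (EProb B)) ∧
      (∃ K : Set (ℕ → ℕ), IsCompact K ∧ MedvedevEquiv (EProb A) K) ∧
      (∃ C : Set (ℕ → ℕ), IsClosed C ∧ MedvedevEquiv (EProb A) C) ∧
      (¬ ∃ g ∈ EProb A, Computable g) ∧
      (∀ f : ℕ → ℕ, ¬ Computable f → ¬ MedvedevLE {f} (EProb A)) := by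
  exact ⟨S17.Aset, S17.Aset_nonempty,
    ⟨S17.Aset, S17.Aset_quasiminimal, S17.medvedevLE_refl _, S17.medvedevLE_refl _⟩,
    ⟨S17.Kprob, S17.Kprob_compact, S17.EProb_equiv_Kprob⟩,
    ⟨S17.Kprob, S17.Kprob_compact.isClosed, S17.EProb_equiv_Kprob⟩,
    S17.no_computable_enum, fun f hf => S17.not_solv hf⟩
end

section
/- There is a nonzero degree of enumerability that does not bound any nonzero closed Medvedev degree: there is a set A ⊆ ω such that E_A has no recursive member, yet every closed C ⊆ ω^ω with C ≤_s E_A has a recursive member. -/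
namespace S19

/-- codes of dyadic rationals: `n` codes `n.unpair.1 / 2 ^ n.unpair.2`. -/
def dlt (m n : ℕ) : Prop := m.unpair.1 * 2 ^ n.unpair.2 < n.unpair.1 * 2 ^ m.unpair.2
def dle (m n : ℕ) : Prop := m.unpair.1 * 2 ^ n.unpair.2 ≤ n.unpair.1 * 2 ^ m.unpair.2

instance (m n : ℕ) : Decidable (dlt m n) := by unfold dlt; infer_instance

lemma dle_refl (m : ℕ) : dle m m := le_refl _

lemma dlt_dle (h : dlt m n) : dle m n := le_of_lt h

lemma not_dlt_iff (m n : ℕ) : ¬ dlt m n ↔ dle n m := not_lt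

lemma dlt_irrefl (m : ℕ) : ¬ dlt m m := lt_irrefl _

private lemma cancel_lt {a b c : ℕ} (h : a * c < b * c) : a < b :=
  lt_of_mul_lt_mul_right h (Nat.zero_le c)

private lemma cancel_le {a b c : ℕ} (hc : 0 < c) (h : a * c ≤ b * c) : a ≤ b :=
  le_of_mul_le_mul_right h hc

lemma dlt_trans {m n k : ℕ} (h1 : dlt m n) (h2 : dlt n k) : dlt m k := by
  unfold dlt at *
  refine cancel_lt (c := 2 ^ n.unpair.2) ?_
  calc m.unpair.1 * 2 ^ k.unpair.2 * 2 ^ n.unpair.2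
      = m.unpair.1 * 2 ^ n.unpair.2 * 2 ^ k.unpair.2 := by ring
    _ < n.unpair.1 * 2 ^ m.unpair.2 * 2 ^ k.unpair.2 := by
        exact mul_lt_mul_of_pos_right h1 (by positivity)
    _ = n.unpair.1 * 2 ^ k.unpair.2 * 2 ^ m.unpair.2 := by ring
    _ < k.unpair.1 * 2 ^ n.unpair.2 * 2 ^ m.unpair.2 := by
        exact mul_lt_mul_of_pos_right h2 (by positivity)
    _ = k.unpair.1 * 2 ^ m.unpair.2 * 2 ^ n.unpair.2 := by ring

lemma dle_trans {m n k : ℕ} (h1 : dle m n) (h2 : dle n k) : dle m k := by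
  unfold dle at *
  refine cancel_le (by positivity) (c := 2 ^ n.unpair.2) ?_
  calc m.unpair.1 * 2 ^ k.unpair.2 * 2 ^ n.unpair.2
      = m.unpair.1 * 2 ^ n.unpair.2 * 2 ^ k.unpair.2 := by ring
    _ ≤ n.unpair.1 * 2 ^ m.unpair.2 * 2 ^ k.unpair.2 := by
        exact Nat.mul_le_mul_right _ h1
    _ = n.unpair.1 * 2 ^ k.unpair.2 * 2 ^ m.unpair.2 := by ring
    _ ≤ k.unpair.1 * 2 ^ n.unpair.2 * 2 ^ m.unpair.2 := by
        exact Nat.mul_le_mul_right _ h2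
    _ = k.unpair.1 * 2 ^ m.unpair.2 * 2 ^ n.unpair.2 := by ring

lemma dlt_dle_trans {m n k : ℕ} (h1 : dlt m n) (h2 : dle n k) : dlt m k := by
  unfold dlt dle at *
  refine cancel_lt (c := 2 ^ n.unpair.2) ?_
  calc m.unpair.1 * 2 ^ k.unpair.2 * 2 ^ n.unpair.2
      = m.unpair.1 * 2 ^ n.unpair.2 * 2 ^ k.unpair.2 := by ring
    _ < n.unpair.1 * 2 ^ m.unpair.2 * 2 ^ k.unpair.2 := by
        exact mul_lt_mul_of_pos_right h1 (by positivity)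
    _ = n.unpair.1 * 2 ^ k.unpair.2 * 2 ^ m.unpair.2 := by ring
    _ ≤ k.unpair.1 * 2 ^ n.unpair.2 * 2 ^ m.unpair.2 := by
        exact Nat.mul_le_mul_right _ h2
    _ = k.unpair.1 * 2 ^ m.unpair.2 * 2 ^ n.unpair.2 := by ring

lemma dle_dlt_trans {m n k : ℕ} (h1 : dle m n) (h2 : dlt n k) : dlt m k := by
  unfold dlt dle at *
  refine cancel_lt (c := 2 ^ n.unpair.2) ?_
  calc m.unpair.1 * 2 ^ k.unpair.2 * 2 ^ n.unpair.2
      = m.unpair.1 * 2 ^ n.unpair.2 * 2 ^ k.unpair.2 := by ring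
    _ ≤ n.unpair.1 * 2 ^ m.unpair.2 * 2 ^ k.unpair.2 := by
        exact Nat.mul_le_mul_right _ h1
    _ = n.unpair.1 * 2 ^ k.unpair.2 * 2 ^ m.unpair.2 := by ring
    _ < k.unpair.1 * 2 ^ n.unpair.2 * 2 ^ m.unpair.2 := by
        exact mul_lt_mul_of_pos_right h2 (by positivity)
    _ = k.unpair.1 * 2 ^ m.unpair.2 * 2 ^ n.unpair.2 := by ring

lemma dlt_asymm {m n : ℕ} (h1 : dlt m n) (h2 : dlt n m) : False :=
  dlt_irrefl m (dlt_trans h1 h2)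

/-- midpoint -/
def mid (p r : ℕ) : ℕ :=
  Nat.pair (p.unpair.1 * 2 ^ r.unpair.2 + r.unpair.1 * 2 ^ p.unpair.2)
    (p.unpair.2 + r.unpair.2 + 1)

lemma dlt_mid_left {p r : ℕ} (h : dlt p r) : dlt p (mid p r) := by
  unfold dlt mid at *
  rw [Nat.unpair_pair]
  simp only [pow_add, pow_succ, pow_zero, one_mul]
  nlinarith [mul_lt_mul_of_pos_right h (pow_pos (by norm_num : (0:ℕ) < 2) p.unpair.2),
    pow_pos (by norm_num : (0:ℕ) < 2) p.unpair.2,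
    pow_pos (by norm_num : (0:ℕ) < 2) r.unpair.2]

lemma dlt_mid_right {p r : ℕ} (h : dlt p r) : dlt (mid p r) r := by
  unfold dlt mid at *
  rw [Nat.unpair_pair]
  simp only [pow_add, pow_succ, pow_zero, one_mul]
  nlinarith [mul_lt_mul_of_pos_right h (pow_pos (by norm_num : (0:ℕ) < 2) r.unpair.2),
    pow_pos (by norm_num : (0:ℕ) < 2) p.unpair.2,
    pow_pos (by norm_num : (0:ℕ) < 2) r.unpair.2]

/-- max of a list of codes with a default -/
def dmax (a b : ℕ) : ℕ := if dlt a b then b else a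

lemma dle_dmax_left (a b : ℕ) : dle a (dmax a b) := by
  unfold dmax; split
  · exact dlt_dle ‹_›
  · exact dle_refl a

lemma dle_dmax_right (a b : ℕ) : dle b (dmax a b) := by
  unfold dmax; split
  · exact dle_refl b
  · exact (not_dlt_iff a b).1 ‹_›

lemma dmax_dlt {a b q : ℕ} (ha : dlt a q) (hb : dlt b q) : dlt (dmax a b) q := by
  unfold dmax; split <;> assumption

def maxc : List ℕ → ℕ → ℕ
  | [], d => d
  | a :: l, d => dmax a (maxc l d)

lemma dle_maxc_default (l : List ℕ) (d : ℕ) : dle d (maxc l d) := by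
  induction l with
  | nil => exact dle_refl d
  | cons a l ih => exact dle_trans ih (dle_dmax_right a (maxc l d))

lemma dle_maxc_mem {l : List ℕ} {x : ℕ} (h : x ∈ l) (d : ℕ) : dle x (maxc l d) := by
  induction l with
  | nil => simp at h
  | cons a l ih =>
    rcases List.mem_cons.1 h with rfl | h
    · exact dle_dmax_left x (maxc l d)
    · exact dle_trans (ih h) (dle_dmax_right a (maxc l d))

lemma maxc_dlt {l : List ℕ} {d q : ℕ} (hd : dlt d q) (hl : ∀ x ∈ l, dlt x q) :
    dlt (maxc l d) q := by
  induction l with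
  | nil => exact hd
  | cons a l ih =>
    exact dmax_dlt (hl a List.mem_cons_self) (ih fun x hx => hl x (List.mem_cons_of_mem a hx))

open Nat.Partrec (Code)
open Nat.Partrec.Code

lemma dlt_base : dlt (Nat.pair 1 1) (Nat.pair 1 0) := by
  unfold dlt; rw [Nat.unpair_pair, Nat.unpair_pair]; norm_num

lemma dlt_zero_base : dlt 0 (Nat.pair 1 1) := by
  unfold dlt; rw [Nat.unpair_pair, Nat.unpair_zero]; norm_num

lemma dlt_def (m n : ℕ) :
    dlt m n ↔ m.unpair.1 * 2 ^ n.unpair.2 < n.unpair.1 * 2 ^ m.unpair.2 := Iff.rfl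

attribute [irreducible] dlt dle mid

def HaltB (c : Code) (τ : List ℕ) (m : ℕ) : Prop := (c.eval (Encodable.encode (τ, m))).Dom

def good (q : ℕ) (σ : List ℕ) : Prop := ∀ n ∈ σ, dlt n q

def DiagReq (c : Code) (pr pr' : ℕ × ℕ) : Prop :=
  ∃ n, ((c.eval n).Dom ∧ dle pr'.2 n) ∨ (¬(c.eval n).Dom ∧ dlt n pr'.1)

def FuncReq (c : Code) (pr pr' : ℕ × ℕ) : Prop :=
  (∃ q m σ, good q σ ∧ (∀ τ, good q τ → σ <+: τ → ¬ HaltB c τ m) ∧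
      dle pr'.2 q ∧ good pr'.1 σ) ∨
  (∃ q, dlt q pr'.1 ∧ ∀ m σ, good q σ → ∃ τ, σ <+: τ ∧ good q τ ∧ HaltB c τ m)

def StepR (s : ℕ) (pr pr' : ℕ × ℕ) : Prop :=
  dlt pr.1 pr'.1 ∧ dlt pr'.2 pr.2 ∧ dlt pr'.1 pr'.2 ∧
    (if s % 2 = 0 then DiagReq (Denumerable.ofNat Code (s / 2)) pr pr'
     else FuncReq (Denumerable.ofNat Code (s / 2)) pr pr')

lemma exists_step (s : ℕ) (pr : ℕ × ℕ) (h : dlt pr.1 pr.2) : ∃ pr', StepR s pr pr' := by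
  obtain ⟨p, r⟩ := pr
  simp only at h
  by_cases hs : s % 2 = 0
  · -- diagonalization step
    set c := Denumerable.ofNat Code (s / 2)
    set n := mid p r with hn
    have hpn : dlt p n := dlt_mid_left h
    have hnr : dlt n r := dlt_mid_right h
    by_cases hdom : (c.eval n).Dom
    · refine ⟨(mid p n, n), dlt_mid_left hpn, hnr, dlt_mid_right hpn, ?_⟩
      rw [if_pos hs]
      exact ⟨n, Or.inl ⟨hdom, dle_refl n⟩⟩
    · set a := mid n r
      have hna : dlt n a := dlt_mid_left hnr
      have har : dlt a r := dlt_mid_right hnr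
      refine ⟨(a, mid a r), dlt_trans hpn hna, dlt_mid_right har, dlt_mid_left har, ?_⟩
      rw [if_pos hs]
      exact ⟨n, Or.inr ⟨hdom, hna⟩⟩
  · -- functional step
    set c := Denumerable.ofNat Code (s / 2)
    by_cases hcase : ∃ q m σ, dlt p q ∧ dlt q r ∧ good q σ ∧
        ∀ τ, good q τ → σ <+: τ → ¬ HaltB c τ m
    · obtain ⟨q, m, σ, hpq, hqr, hgood, hno⟩ := hcase
      set M := maxc σ p
      have hMq : dlt M q := maxc_dlt hpq hgood
      set p' := mid M q
      refine ⟨(p', q), ?_, hqr, dlt_mid_right hMq, ?_⟩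
      · exact dle_dlt_trans (dle_maxc_default σ p) (dlt_mid_left hMq)
      · rw [if_neg hs]
        refine Or.inl ⟨q, m, σ, hgood, hno, dle_refl q, ?_⟩
        intro x hx
        exact dle_dlt_trans (dle_maxc_mem hx p) (dlt_mid_left hMq)
    · set q := mid p r
      have hpq : dlt p q := dlt_mid_left h
      have hqr : dlt q r := dlt_mid_right h
      set q' := mid q r
      have hqq' : dlt q q' := dlt_mid_left hqr
      have hq'r : dlt q' r := dlt_mid_right hqr
      refine ⟨(q', mid q' r), dlt_trans hpq hqq', dlt_mid_right hq'r, dlt_mid_left hq'r, ?_⟩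
      rw [if_neg hs]
      refine Or.inr ⟨q, hqq', ?_⟩
      intro m σ hσ
      by_contra hno
      push_neg at hno
      exact hcase ⟨q, m, σ, hpq, hqr, hσ, fun τ hτ hpre hH => hno τ hpre hτ hH⟩

noncomputable def seqP : ℕ → {pr : ℕ × ℕ // dlt pr.1 pr.2}
  | 0 => ⟨(Nat.pair 1 1, Nat.pair 1 0), dlt_base⟩
  | s + 1 =>
    let h := exists_step s (seqP s).1 (seqP s).2
    ⟨h.choose, h.choose_spec.2.2.1⟩

noncomputable def pseq (s : ℕ) : ℕ := (seqP s).1.1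
noncomputable def rseq (s : ℕ) : ℕ := (seqP s).1.2

lemma pseq_zero : pseq 0 = Nat.pair 1 1 := rfl

lemma step_spec (s : ℕ) : StepR s (pseq s, rseq s) (pseq (s + 1), rseq (s + 1)) := by
  have h := exists_step s (seqP s).1 (seqP s).2
  have heq : (seqP (s+1)).1 = h.choose := rfl
  have h2 := h.choose_spec
  rw [← heq] at h2
  simpa [pseq, rseq] using h2

lemma pr_dlt (s : ℕ) : dlt (pseq s) (rseq s) := (seqP s).2

lemma pseq_mono {s t : ℕ} (h : s ≤ t) : dle (pseq s) (pseq t) := by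
  induction t with
  | zero => cases Nat.le_zero.1 h; exact dle_refl _
  | succ t ih =>
    rcases Nat.lt_or_ge s (t+1) with h' | h'
    · exact dle_trans (ih (Nat.lt_succ_iff.1 h')) (dlt_dle (step_spec t).1)
    · have : s = t + 1 := le_antisymm h h'
      subst this; exact dle_refl _

lemma rseq_mono {s t : ℕ} (h : s ≤ t) : dle (rseq t) (rseq s) := by
  induction t with
  | zero => cases Nat.le_zero.1 h; exact dle_refl _
  | succ t ih =>
    rcases Nat.lt_or_ge s (t+1) with h' | h'
    · exact dle_trans (dlt_dle (step_spec t).2.1) (ih (Nat.lt_succ_iff.1 h'))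
    · have : s = t + 1 := le_antisymm h h'
      subst this; exact dle_refl _

lemma pseq_dlt_rseq (s t : ℕ) : dlt (pseq s) (rseq t) := by
  rcases le_total s t with h | h
  · exact dle_dlt_trans (pseq_mono h) (pr_dlt t)
  · exact dlt_dle_trans (pr_dlt s) (rseq_mono h)

def Aset : Set ℕ := {n | ∃ s, dlt n (pseq s)}

lemma Aset_dlt_rseq {n : ℕ} (h : n ∈ Aset) (t : ℕ) : dlt n (rseq t) := by
  obtain ⟨s, hs⟩ := h
  exact dlt_trans hs (pseq_dlt_rseq s t)

lemma zero_mem_Aset : (0 : ℕ) ∈ Aset := ⟨0, by rw [pseq_zero]; exact dlt_zero_base⟩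

/-! ### The computable construction of a path, given a `q`-totality property -/

def extL (z : ℕ) : List ℕ := Denumerable.ofNat (List ℕ) z.unpair.1

def goodb (q : ℕ) (l : List ℕ) : Bool :=
  l.foldr (fun n b => decide (dlt n q) && b) true

lemma goodb_iff (q : ℕ) (l : List ℕ) : goodb q l = true ↔ good q l := by
  induction l with
  | nil => simp [goodb, good]
  | cons a l ih =>
    simp only [goodb, List.foldr_cons, Bool.and_eq_true, decide_eq_true_eq] at *
    constructor
    · rintro ⟨h1, h2⟩ n hn
      rcases List.mem_cons.1 hn with rfl | hn
      · exact h1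
      · exact ih.1 h2 n hn
    · intro h
      exact ⟨h a List.mem_cons_self, ih.2 fun n hn => h n (List.mem_cons_of_mem a hn)⟩

def pb (c : Code) (q : ℕ) (σ : List ℕ) (m z : ℕ) : Bool :=
  goodb q (σ ++ extL z) &&
    (evaln z.unpair.2 c (Encodable.encode (σ ++ extL z, m))).isSome

def pick (c : Code) (q : ℕ) (σ : List ℕ) (m t : ℕ) : Option ℕ :=
  (List.range t).foldr (fun z o => if pb c q σ m z then some z else o) none

def stepR (c : Code) (q m t : ℕ) (s : List ℕ × ℕ) : Option (List ℕ × ℕ) :=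
  (pick c q s.1 m t).map fun z =>
    (s.1 ++ extL z, (evaln z.unpair.2 c (Encodable.encode (s.1 ++ extL z, m))).getD 0)

def RR (c : Code) (q t m : ℕ) : Option (List ℕ × ℕ) :=
  Nat.rec (some ([], 0)) (fun m ih => ih.bind (stepR c q m t)) m

private def G (c : Code) (q : ℕ) (σ : List ℕ) (m : ℕ) (l : List ℕ) (o : Option ℕ) : Option ℕ :=
  l.foldr (fun z o => if pb c q σ m z then some z else o) o

private lemma G_stable {c : Code} {q : ℕ} {σ : List ℕ} {m : ℕ} {l : List ℕ} {z : ℕ}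
    (h : G c q σ m l none = some z) (o : Option ℕ) : G c q σ m l o = some z := by
  induction l with
  | nil => simp [G] at h
  | cons a l ih =>
    by_cases hA : pb c q σ m a = true
    · simp only [G, List.foldr_cons, if_pos hA] at h ⊢; exact h
    · simp only [G, List.foldr_cons, if_neg hA] at h ⊢; exact ih h

private lemma G_none {c : Code} {q : ℕ} {σ : List ℕ} {m : ℕ} {l : List ℕ}
    (h : G c q σ m l none = none) : ∀ z ∈ l, ¬ pb c q σ m z = true := by
  induction l with
  | nil => simp
  | cons a l ih =>
    by_cases hA : pb c q σ m a = true
    · simp only [G, List.foldr_cons, if_pos hA] at h; exact absurd h (by simp)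
    · simp only [G, List.foldr_cons, if_neg hA] at h
      intro z hz
      rcases List.mem_cons.1 hz with rfl | hz
      · exact hA
      · exact ih h z hz

private lemma G_some {c : Code} {q : ℕ} {σ : List ℕ} {m : ℕ} {l : List ℕ} {z : ℕ}
    (h : G c q σ m l none = some z) : pb c q σ m z = true := by
  induction l with
  | nil => simp [G] at h
  | cons a l ih =>
    by_cases hA : pb c q σ m a = true
    · simp only [G, List.foldr_cons, if_pos hA] at h; cases h; exact hA
    · simp only [G, List.foldr_cons, if_neg hA] at h; exact ih h

lemma pick_eq_G (c : Code) (q : ℕ) (σ : List ℕ) (m t : ℕ) :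
    pick c q σ m t = G c q σ m (List.range t) none := rfl

lemma pick_stable {c : Code} {q : ℕ} {σ : List ℕ} {m t t' : ℕ} {z : ℕ}
    (h : pick c q σ m t = some z) (htt : t ≤ t') : pick c q σ m t' = some z := by
  rw [pick_eq_G] at h ⊢
  obtain ⟨d, rfl⟩ := Nat.exists_eq_add_of_le htt
  rw [List.range_add]
  unfold G
  rw [List.foldr_append]
  exact G_stable h _

lemma pick_spec {c : Code} {q : ℕ} {σ : List ℕ} {m t : ℕ} {z : ℕ}
    (h : pick c q σ m t = some z) : pb c q σ m z = true := G_some h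

lemma pick_exists {c : Code} {q : ℕ} {σ : List ℕ} {m t : ℕ} {z : ℕ} (hz : z < t)
    (h : pb c q σ m z = true) : ∃ z', pick c q σ m t = some z' := by
  rw [pick_eq_G]
  cases he : G c q σ m (List.range t) none with
  | none => exact absurd h (G_none he z (List.mem_range.2 hz))
  | some z' => exact ⟨z', rfl⟩

lemma RR_zero (c : Code) (q t : ℕ) : RR c q t 0 = some ([], 0) := rfl

lemma RR_succ (c : Code) (q t m : ℕ) :
    RR c q t (m+1) = (RR c q t m).bind (stepR c q m t) := rfl

lemma RR_mono {c : Code} {q t t' m : ℕ} {s : List ℕ × ℕ} (h : RR c q t m = some s)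
    (htt : t ≤ t') : RR c q t' m = some s := by
  induction m generalizing s with
  | zero => simpa [RR_zero] using h
  | succ m ih =>
    rw [RR_succ] at h ⊢
    rcases Option.bind_eq_some_iff.1 h with ⟨u, hu, hstep⟩
    rw [ih hu]
    simp only [Option.bind_some]
    unfold stepR at hstep ⊢
    rcases Option.map_eq_some_iff.1 hstep with ⟨z, hz, rfl⟩
    rw [pick_stable hz htt]
    rfl

lemma RR_det {c : Code} {q t t' m : ℕ} {s s' : List ℕ × ℕ} (h : RR c q t m = some s)
    (h' : RR c q t' m = some s') : s = s' := by
  rcases le_total t t' with htt | htt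
  · have := RR_mono h htt; rw [this] at h'; exact Option.some_inj.1 h'
  · have := RR_mono h' htt; rw [this] at h; exact (Option.some_inj.1 h).symm

lemma RR_good {c : Code} {q t m : ℕ} {s : List ℕ × ℕ} (h : RR c q t m = some s) :
    good q s.1 := by
  induction m generalizing s with
  | zero =>
    rw [RR_zero] at h
    cases h; intro n hn; simp at hn
  | succ m ih =>
    rw [RR_succ] at h
    rcases Option.bind_eq_some_iff.1 h with ⟨u, hu, hstep⟩
    unfold stepR at hstep
    rcases Option.map_eq_some_iff.1 hstep with ⟨z, hz, rfl⟩
    have := pick_spec hz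
    unfold pb at this
    rw [Bool.and_eq_true] at this
    exact (goodb_iff _ _).1 this.1

lemma RR_prefix_succ {c : Code} {q t m : ℕ} {s' : List ℕ × ℕ}
    (h : RR c q t (m+1) = some s') : ∃ s, RR c q t m = some s ∧ s.1 <+: s'.1 := by
  rw [RR_succ] at h
  rcases Option.bind_eq_some_iff.1 h with ⟨u, hu, hstep⟩
  unfold stepR at hstep
  rcases Option.map_eq_some_iff.1 hstep with ⟨z, hz, rfl⟩
  exact ⟨u, hu, ⟨extL z, rfl⟩⟩

lemma RR_prefix {c : Code} {q t : ℕ} {m m' : ℕ} (hmm : m ≤ m') {s' : List ℕ × ℕ}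
    (h : RR c q t m' = some s') : ∃ s, RR c q t m = some s ∧ s.1 <+: s'.1 := by
  induction m' generalizing s' with
  | zero => cases Nat.le_zero.1 hmm; exact ⟨s', h, List.prefix_refl _⟩
  | succ m' ih =>
    rcases Nat.lt_or_ge m (m'+1) with h' | h'
    · obtain ⟨u, hu, hpre⟩ := RR_prefix_succ h
      obtain ⟨s, hs, hpre'⟩ := ih (Nat.lt_succ_iff.1 h') hu
      exact ⟨s, hs, hpre'.trans hpre⟩
    · have : m = m' + 1 := le_antisymm hmm h'
      subst this; exact ⟨s', h, List.prefix_refl _⟩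

lemma RR_value {c : Code} {q t m : ℕ} {s' : List ℕ × ℕ} (h : RR c q t (m+1) = some s') :
    s'.2 ∈ c.eval (Encodable.encode (s'.1, m)) := by
  rw [RR_succ] at h
  rcases Option.bind_eq_some_iff.1 h with ⟨u, hu, hstep⟩
  unfold stepR at hstep
  rcases Option.map_eq_some_iff.1 hstep with ⟨z, hz, rfl⟩
  have hpb := pick_spec hz
  unfold pb at hpb
  rw [Bool.and_eq_true] at hpb
  rcases Option.isSome_iff_exists.1 hpb.2 with ⟨y, hy⟩
  have hmem : y ∈ evaln z.unpair.2 c (Encodable.encode (u.1 ++ extL z, m)) := hy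
  have hev := evaln_sound hmem
  simp only [hy, Option.getD_some]
  exact hev

lemma RR_total {c : Code} {q : ℕ}
    (htot : ∀ m σ, good q σ → ∃ τ, σ <+: τ ∧ good q τ ∧ HaltB c τ m) :
    ∀ m, ∃ t s, RR c q t m = some s := by
  intro m
  induction m with
  | zero => exact ⟨0, ([], 0), RR_zero c q 0⟩
  | succ m ih =>
    obtain ⟨t, s, hs⟩ := ih
    obtain ⟨τ, hpre, hτgood, hτhalt⟩ := htot m s.1 (RR_good hs)
    obtain ⟨l', rfl⟩ := hpre
    obtain ⟨y, hy⟩ := Part.dom_iff_mem.1 hτhalt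
    obtain ⟨k, hk⟩ := evaln_complete.1 hy
    set z := Nat.pair (Encodable.encode l') k with hz
    have hext : extL z = l' := by
      simp [extL, hz, Nat.unpair_pair, Denumerable.ofNat_encode]
    have hpb : pb c q s.1 m z = true := by
      unfold pb
      rw [Bool.and_eq_true, hext]
      constructor
      · exact (goodb_iff _ _).2 hτgood
      · simp only [hz, Nat.unpair_pair]
        exact Option.isSome_iff_exists.2 ⟨y, hk⟩
    set t' := max t (z + 1) with ht'
    have hs' : RR c q t' m = some s := RR_mono hs (le_max_left _ _)
    obtain ⟨z', hz'⟩ := pick_exists (t := t')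
      (lt_of_lt_of_le (Nat.lt_succ_self z) (le_max_right _ _)) hpb
    refine ⟨t', (s.1 ++ extL z',
      (evaln z'.unpair.2 c (Encodable.encode (s.1 ++ extL z', m))).getD 0), ?_⟩
    rw [RR_succ, hs']
    simp only [Option.bind_some]
    unfold stepR
    rw [hz']
    rfl

set_option maxHeartbeats 1000000 in
lemma pow2_primrec : Primrec (fun k : ℕ => 2 ^ k) := by
  have h : Primrec (fun k : ℕ => (Nat.rec 1 (fun _ ih => 2 * ih) k : ℕ)) :=
    Primrec.nat_rec₁ 1 (Primrec.nat_mul.comp (Primrec.const 2) Primrec.snd)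
  exact h.of_eq fun k => by
    induction k with
    | zero => rfl
    | succ k ih =>
      show 2 * (Nat.rec 1 (fun _ ih => 2 * ih) k : ℕ) = 2 ^ (k + 1)
      rw [ih, pow_succ, Nat.mul_comm]

lemma pdlt_primrec (q : ℕ) : Primrec fun n => decide (dlt n q) := by
  have h : Primrec fun n : ℕ =>
      decide (n.unpair.1 * 2 ^ q.unpair.2 < q.unpair.1 * 2 ^ n.unpair.2) :=
    PrimrecPred.decide (Primrec.nat_lt.comp
      (Primrec.nat_mul.comp (Primrec.fst.comp Primrec.unpair) (Primrec.const _))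
      (Primrec.nat_mul.comp (Primrec.const _)
        (pow2_primrec.comp (Primrec.snd.comp Primrec.unpair))))
  exact h.of_eq fun n => by rw [decide_eq_decide]; exact (dlt_def n q).symm

lemma extL_primrec : Primrec extL :=
  (Primrec.ofNat (List ℕ)).comp (Primrec.fst.comp Primrec.unpair)

lemma goodb_primrec (q : ℕ) : Primrec (goodb q) := by
  have h := Primrec.list_foldr (α := List ℕ) (β := ℕ) (σ := Bool)
    (f := fun l => l) (g := fun _ => true)
    (h := fun _ p => decide (dlt p.1 q) && p.2)
    Primrec.id (Primrec.const true)
    ((Primrec.dom_bool₂ (· && ·)).comp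
      ((pdlt_primrec q).comp (Primrec.fst.comp Primrec.snd))
      (Primrec.snd.comp Primrec.snd))
  exact h.of_eq fun l => rfl

set_option maxHeartbeats 1000000 in
lemma pb_primrec (c : Code) (q : ℕ) :
    Primrec fun x : (List ℕ × ℕ) × ℕ => pb c q x.1.1 x.1.2 x.2 := by
  have hτ : Primrec fun x : (List ℕ × ℕ) × ℕ => x.1.1 ++ extL x.2 :=
    Primrec.list_append.comp (Primrec.fst.comp Primrec.fst) (extL_primrec.comp Primrec.snd)
  have henc : Primrec fun x : (List ℕ × ℕ) × ℕ =>
      Encodable.encode (x.1.1 ++ extL x.2, x.1.2) :=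
    Primrec.encode.comp (hτ.pair (Primrec.snd.comp Primrec.fst))
  have hk : Primrec fun x : (List ℕ × ℕ) × ℕ => x.2.unpair.2 :=
    Primrec.snd.comp (Primrec.unpair.comp Primrec.snd)
  have hev : Primrec fun x : (List ℕ × ℕ) × ℕ =>
      (evaln x.2.unpair.2 c (Encodable.encode (x.1.1 ++ extL x.2, x.1.2))).isSome :=
    Primrec.option_isSome.comp
      (primrec_evaln.comp ((hk.pair (Primrec.const c)).pair henc))
  exact (Primrec.dom_bool₂ (· && ·)).comp ((goodb_primrec q).comp hτ) hev

set_option maxHeartbeats 1000000 in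
lemma pick_primrec (c : Code) (q : ℕ) :
    Primrec fun x : (List ℕ × ℕ) × ℕ => pick c q x.1.1 x.1.2 x.2 := by
  have hstep : Primrec₂ fun (a : (List ℕ × ℕ) × ℕ) (p : ℕ × Option ℕ) =>
      (if pb c q a.1.1 a.1.2 p.1 then some p.1 else p.2 : Option ℕ) := by
    have hc : Primrec fun y : ((List ℕ × ℕ) × ℕ) × (ℕ × Option ℕ) =>
        pb c q y.1.1.1 y.1.1.2 y.2.1 :=
      (pb_primrec c q).comp ((Primrec.fst.comp Primrec.fst).pair
        (Primrec.fst.comp Primrec.snd))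
    have hite : Primrec fun y : ((List ℕ × ℕ) × ℕ) × (ℕ × Option ℕ) =>
        (if pb c q y.1.1.1 y.1.1.2 y.2.1 then some y.2.1 else y.2.2 : Option ℕ) := by
      have h0 := Primrec.cond hc
        (Primrec.option_some.comp (Primrec.fst.comp Primrec.snd))
        (Primrec.snd.comp Primrec.snd)
      exact h0.of_eq fun y => by cases h : pb c q y.1.1.1 y.1.1.2 y.2.1 <;> simp [h]
    exact hite.to₂
  have h := Primrec.list_foldr (α := (List ℕ × ℕ) × ℕ) (β := ℕ) (σ := Option ℕ)
    (f := fun x => List.range x.2) (g := fun _ => none)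
    (h := fun a p => if pb c q a.1.1 a.1.2 p.1 then some p.1 else p.2)
    (Primrec.list_range.comp Primrec.snd) (Primrec.const none) hstep
  exact h.of_eq fun x => rfl

set_option maxHeartbeats 1000000 in
lemma stepR_primrec (c : Code) (q : ℕ) :
    Primrec fun x : (ℕ × ℕ) × (List ℕ × ℕ) => stepR c q x.1.1 x.1.2 x.2 := by
  -- x = ((m, t), s)
  have hpick : Primrec fun x : (ℕ × ℕ) × (List ℕ × ℕ) =>
      pick c q x.2.1 x.1.1 x.1.2 :=
    (pick_primrec c q).comp (((Primrec.fst.comp Primrec.snd).pair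
      (Primrec.fst.comp Primrec.fst)).pair (Primrec.snd.comp Primrec.fst))
  have hmap : Primrec₂ fun (x : (ℕ × ℕ) × (List ℕ × ℕ)) (z : ℕ) =>
      ((x.2.1 ++ extL z,
        (evaln z.unpair.2 c (Encodable.encode (x.2.1 ++ extL z, x.1.1))).getD 0) :
        List ℕ × ℕ) := by
    have hτ : Primrec fun y : ((ℕ × ℕ) × (List ℕ × ℕ)) × ℕ => y.1.2.1 ++ extL y.2 :=
      Primrec.list_append.comp (Primrec.fst.comp (Primrec.snd.comp Primrec.fst))
        (extL_primrec.comp Primrec.snd)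
    have henc : Primrec fun y : ((ℕ × ℕ) × (List ℕ × ℕ)) × ℕ =>
        Encodable.encode (y.1.2.1 ++ extL y.2, y.1.1.1) :=
      Primrec.encode.comp (hτ.pair (Primrec.fst.comp (Primrec.fst.comp Primrec.fst)))
    have hev : Primrec fun y : ((ℕ × ℕ) × (List ℕ × ℕ)) × ℕ =>
        (evaln y.2.unpair.2 c (Encodable.encode (y.1.2.1 ++ extL y.2, y.1.1.1))).getD 0 :=
      Primrec.option_getD.comp
        (primrec_evaln.comp
          (((Primrec.snd.comp (Primrec.unpair.comp Primrec.snd)).pair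
            (Primrec.const c)).pair henc))
        (Primrec.const 0)
    exact (hτ.pair hev).to₂
  exact (Primrec.option_map hpick hmap).of_eq fun x => rfl



set_option maxHeartbeats 1000000 in
lemma RR_computable (c : Code) (q : ℕ) : Computable₂ fun m t => RR c q t m := by
  have hg : Computable fun y : ((ℕ × ℕ) × (ℕ × Option (List ℕ × ℕ))) × (List ℕ × ℕ) =>
      stepR c q y.1.2.1 y.1.1.2 y.2 :=
    ((stepR_primrec c q).comp
      (((Primrec.fst.comp (Primrec.snd.comp Primrec.fst)).pair
        (Primrec.snd.comp (Primrec.fst.comp Primrec.fst))).pair Primrec.snd)).to_comp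
  have hh : Computable₂ fun (a : ℕ × ℕ) (p : ℕ × Option (List ℕ × ℕ)) =>
      p.2.bind (stepR c q p.1 a.2) :=
    (Computable.option_bind (Computable.snd.comp Computable.snd) hg.to₂).to₂
  have h := Computable.nat_rec (α := ℕ × ℕ) (σ := Option (List ℕ × ℕ))
    (f := fun a => a.1) (g := fun _ => (some ([], 0) : Option (List ℕ × ℕ)))
    (h := fun a p => p.2.bind (stepR c q p.1 a.2))
    Computable.fst (Computable.const _) hh
  exact (h.of_eq fun a => rfl).to₂

-- Section 5: verification lemmas (inside namespace S19)

lemma exists_enum_ext (τ : List ℕ) (hτ : ∀ n ∈ τ, n ∈ Aset) :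
    ∃ g : ℕ → ℕ, Set.range g = Aset ∧ (List.range τ.length).map g = τ := by
  obtain ⟨e, he⟩ := (Set.to_countable Aset).exists_eq_range ⟨0, zero_mem_Aset⟩
  refine ⟨fun i => if h : i < τ.length then τ.get ⟨i, h⟩ else e (i - τ.length), ?_, ?_⟩
  · ext x
    constructor
    · rintro ⟨i, rfl⟩
      dsimp only
      split
      · exact hτ _ (τ.get_mem _)
      · rw [he]; exact ⟨_, rfl⟩
    · intro hx
      rw [he] at hx
      obtain ⟨j, rfl⟩ := hx
      refine ⟨j + τ.length, ?_⟩
      dsimp only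
      rw [dif_neg (by omega)]
      congr 1
      omega
  · apply List.ext_getElem (by simp)
    intro i h1 h2
    simp only [List.getElem_map, List.getElem_range]
    rw [dif_pos h2]
    simp [List.get_eq_getElem]

lemma prefix_map_range {g : ℕ → ℕ} {k K : ℕ} (h : k ≤ K) :
    (List.range k).map g <+: (List.range K).map g := by
  obtain ⟨d, rfl⟩ := Nat.exists_eq_add_of_le h
  rw [List.range_add, List.map_append]
  exact ⟨_, rfl⟩

lemma code_of_phi (Φ : TuringFunctional) :
    ∃ c : Code, ∀ (τ : List ℕ) (m y : ℕ),
      y ∈ c.eval (Encodable.encode (τ, m)) ↔ y ∈ Φ.app (τ, m) := by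
  have hp : Nat.Partrec fun n =>
      Part.bind (Encodable.decode (α := List ℕ × ℕ) n) fun a =>
        (Φ.app a).map Encodable.encode :=
    Φ.partrec
  obtain ⟨c, hc⟩ := exists_code.1 hp
  refine ⟨c, fun τ m y => ?_⟩
  rw [hc]
  simp [Encodable.encodek]

lemma range_is_dom (g : ℕ → ℕ) (hg : Computable g) :
    ∃ c : Code, ∀ x, (c.eval x).Dom ↔ x ∈ Set.range g := by
  have hcomp : Computable fun p : ℕ × ℕ => (decide (g p.2 = p.1)) :=
    (PrimrecRel.decide (Primrec.eq (α := ℕ))).to_comp.comp (hg.comp Computable.snd) Computable.fst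
  have h2 : Partrec₂ fun x n : ℕ => (Part.some (decide (g n = x)) : Part Bool) :=
    hcomp.to₂.partrec₂
  have hp : Partrec fun x : ℕ => Nat.rfind fun n => Part.some (decide (g n = x)) :=
    Partrec.rfind h2
  obtain ⟨c, hc⟩ := exists_code.1 (Partrec.nat_iff.1 hp)
  refine ⟨c, fun x => ?_⟩
  rw [hc]
  refine Iff.trans Nat.rfind_dom ?_
  constructor
  · rintro ⟨n, hn, -⟩
    simp only [Part.mem_some_iff] at hn
    exact ⟨n, by simpa using hn.symm⟩
  · rintro ⟨n, rfl⟩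
    exact ⟨n, by simp, fun {_} _ => trivial⟩

lemma Aset_not_ce : ¬ ∃ g : ℕ → ℕ, Set.range g = Aset ∧ Computable g := by
  rintro ⟨g, hrange, hcomp⟩
  obtain ⟨c, hc⟩ := range_is_dom g hcomp
  have hstep := step_spec (2 * Encodable.encode c)
  obtain ⟨-, -, -, hreq⟩ := hstep
  rw [if_pos (by omega : (2 * Encodable.encode c) % 2 = 0)] at hreq
  rw [(by omega : (2 * Encodable.encode c) / 2 = Encodable.encode c),
    Denumerable.ofNat_encode] at hreq
  obtain ⟨n, hcase⟩ := hreq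
  rcases hcase with ⟨hdom, hle⟩ | ⟨hndom, hlt⟩
  · have hnA : n ∈ Aset := by rw [← hrange]; exact (hc n).1 hdom
    obtain ⟨t, ht⟩ := hnA
    exact dlt_irrefl n (dlt_trans ht
      (dlt_dle_trans (pseq_dlt_rseq t (2 * Encodable.encode c + 1)) hle))
  · have hnA : n ∈ Aset := ⟨2 * Encodable.encode c + 1, hlt⟩
    rw [← hrange] at hnA
    exact hndom ((hc n).2 hnA)

/-- Main functional verification. -/
lemma main_verif (C : Set (ℕ → ℕ)) (hC : IsClosed C) (Φ : TuringFunctional)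
    (hΦ : ∀ g : ℕ → ℕ, Set.range g = Aset → ∃ f, Φ.Total g f ∧ f ∈ C) :
    ∃ g ∈ C, Computable g := by
  obtain ⟨c, hcode⟩ := code_of_phi Φ
  have hstep := step_spec (2 * Encodable.encode c + 1)
  obtain ⟨-, -, -, hreq⟩ := hstep
  rw [if_neg (by omega : ¬ (2 * Encodable.encode c + 1) % 2 = 0)] at hreq
  rw [(by omega : (2 * Encodable.encode c + 1) / 2 = Encodable.encode c),
    Denumerable.ofNat_encode] at hreq
  set s : ℕ := 2 * Encodable.encode c + 1 with hs
  rcases hreq with ⟨q, m, σ, hgoodq, hno, hrq, hgoodp⟩ | ⟨q, hqp, htot⟩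
  · -- Case 1: contradiction with totality of Φ on enumerations of Aset
    exfalso
    have hσA : ∀ n ∈ σ, n ∈ Aset := fun n hn => ⟨s + 1, hgoodp n hn⟩
    obtain ⟨g, hgrange, hgpre⟩ := exists_enum_ext σ hσA
    obtain ⟨f, hTot, -⟩ := hΦ g hgrange
    obtain ⟨k, hk⟩ := hTot m
    have hfm : f m ∈ Φ.app ((List.range (max k σ.length)).map g, m) :=
      Φ.mono (prefix_map_range (le_max_left _ _)) hk
    have hτgood : good q ((List.range (max k σ.length)).map g) := by
      intro n hn
      obtain ⟨i, -, rfl⟩ := List.mem_map.1 hn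
      have : g i ∈ Aset := by rw [← hgrange]; exact ⟨i, rfl⟩
      exact dlt_dle_trans (Aset_dlt_rseq this (s + 1)) hrq
    have hpre : σ <+: (List.range (max k σ.length)).map g := by
      conv_lhs => rw [← hgpre]
      exact prefix_map_range (le_max_right _ _)
    exact hno _ hτgood hpre (Part.dom_iff_mem.2 ⟨f m, (hcode _ m (f m)).2 hfm⟩)
  · -- Case 2: build a computable element of C
    have htotal : ∀ M, ∃ t u, RR c q t M = some u := RR_total htot
    choose T S hTS using fun m => htotal (m + 1)
    have hSgood : ∀ m, good q (S m).1 := fun m => RR_good (hTS m)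
    have hSval : ∀ m, (S m).2 ∈ Φ.app ((S m).1, m) :=
      fun m => (hcode _ _ _).1 (RR_value (hTS m))
    have hSpre : ∀ {m m'}, m ≤ m' → (S m).1 <+: (S m').1 := by
      intro m m' hmm
      obtain ⟨u, hu, hupre⟩ := RR_prefix (Nat.succ_le_succ hmm) (hTS m')
      rwa [RR_det hu (hTS m)] at hupre
    set h : ℕ → ℕ := fun m => (S m).2 with hh
    -- computability of h
    have hRRcomp := RR_computable c q
    have hrfindarg : Computable₂ fun (m t : ℕ) => ((RR c q t (m + 1)).isSome : Bool) :=
      (Primrec.option_isSome.to_comp.comp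
        (hRRcomp.comp (Computable.succ.comp Computable.fst) Computable.snd)).to₂
    have hval : Computable₂ fun (m t : ℕ) => ((RR c q t (m + 1)).getD ([], 0)).2 :=
      (Computable.snd.comp
        (Primrec.option_getD.to_comp.comp
          (hRRcomp.comp (Computable.succ.comp Computable.fst) Computable.snd)
          (Computable.const ([], 0)))).to₂
    have hHpart : Partrec fun m : ℕ =>
        (Nat.rfind fun t => Part.some ((RR c q t (m + 1)).isSome)).map
          fun t => ((RR c q t (m + 1)).getD ([], 0)).2 := by
      apply Partrec.map
      · exact Partrec.rfind hrfindarg.partrec₂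
      · exact hval
    have hHeq : ∀ m : ℕ,
        ((Nat.rfind fun t => Part.some ((RR c q t (m + 1)).isSome)).map
          fun t => ((RR c q t (m + 1)).getD ([], 0)).2) = Part.some (h m) := by
      intro m
      have hdom : (Nat.rfind fun t => Part.some ((RR c q t (m + 1)).isSome)).Dom := by
        refine Nat.rfind_dom.2 ?_
        exact ⟨T m, by simp [hTS m], fun {_} _ => trivial⟩
      obtain ⟨t0, ht0⟩ := Part.dom_iff_mem.1 hdom
      have hsome : (RR c q t0 (m + 1)).isSome := by simpa using Nat.rfind_spec ht0
      obtain ⟨u0, hu0⟩ := Option.isSome_iff_exists.1 hsome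
      have hu0' : u0 = S m := RR_det hu0 (hTS m)
      apply Part.eq_some_iff.2
      refine (Part.mem_map_iff _).2 ⟨t0, ht0, ?_⟩
      rw [hu0]
      simp [hu0', hh]
    have hhcomp : Computable h := Partrec.of_eq hHpart hHeq
    -- h is in C, since C is closed
    have hgM : ∀ M : ℕ, ∃ fM, fM ∈ C ∧ ∀ i < M, fM i = h i := by
      intro M
      have hA : ∀ n ∈ (S M).1, n ∈ Aset := fun n hn =>
        ⟨s + 1, dlt_trans (hSgood M n hn) hqp⟩
      obtain ⟨g, hgrange, hgpre⟩ := exists_enum_ext _ hA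
      obtain ⟨f, hTot, hfC⟩ := hΦ g hgrange
      refine ⟨f, hfC, fun i hi => ?_⟩
      obtain ⟨k, hk⟩ := hTot i
      have h1 : f i ∈ Φ.app ((List.range (max k (S M).1.length)).map g, i) :=
        Φ.mono (prefix_map_range (le_max_left _ _)) hk
      have h2 : h i ∈ Φ.app ((List.range (max k (S M).1.length)).map g, i) := by
        refine Φ.mono ?_ (hSval i)
        refine (hSpre (le_of_lt hi)).trans ?_
        conv_lhs => rw [← hgpre]
        exact prefix_map_range (le_max_right _ _)
      exact Part.mem_unique h1 h2
    choose FM hFMC hFMeq using hgM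
    have hhC : h ∈ C := by
      refine hC.mem_of_tendsto (f := FM) (b := Filter.atTop) ?_
        (Filter.Eventually.of_forall hFMC)
      rw [tendsto_pi_nhds]
      intro i
      refine Filter.Tendsto.congr' ?_ tendsto_const_nhds
      filter_upwards [Filter.eventually_gt_atTop i] with M hM
      exact (hFMeq M i hM).symm
    exact ⟨h, hhC, hhcomp⟩

end S19

/-- There is a nonzero degree of enumerability that does not bound any nonzero
closed Medvedev degree. -/
theorem stmt19 :
    ∃ A : Set ℕ, A.Nonempty ∧ (¬ ∃ g ∈ EProb A, Computable g) ∧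
      ∀ C : Set (ℕ → ℕ), IsClosed C → MedvedevLE C (EProb A) →
        ∃ g ∈ C, Computable g := by
  refine ⟨S19.Aset, ⟨0, S19.zero_mem_Aset⟩, ?_, ?_⟩
  · rintro ⟨g, hg, hcomp⟩
    exact S19.Aset_not_ce ⟨g, hg, hcomp⟩
  · intro C hC hred
    obtain ⟨Φ, hΦ⟩ := hred
    exact S19.main_verif C hC Φ fun g hg => hΦ g hg
end
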